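/- arXiv:1406.3140 — 5 statements merged into one kernel-verified Lean document; each statement's English description precedes it below -/
import Mathlib

section
/- Let ξ = {X₁, …, X_m} be a partition of a finite set X. Then the maximal Kullback–Leibler divergence to the partition model P_ξ equals D_{P_ξ} = max_{i=1,…,m} log₂|X_i|. -/
open scoped BigOperators

noncomputable section

/-- The real value of a Boolean. -/
def bval (b : Bool) : ℝ := if b then 1 else 0

/-- `p` is a probability distribution on the finite set `X`. -/
def IsProb {X : Type*} [Fintype X] (p : X → ℝ) : Prop :=
  (∀ x, 0 ≤ p x) ∧ ∑ x, p x = 1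

/-- One term of the Kullback-Leibler divergence (base-2 logarithm); terms with `a = 0` are `0`. -/
noncomputable def klTerm (a b : ℝ) : ℝ := if a = 0 then 0 else a * Real.logb 2 (a / b)

/-- Kullback-Leibler divergence with base-2 logarithm; it is `⊤ = ∞` if the support of `q`
does not contain the support of `p`. -/
noncomputable def KL {X : Type*} [Fintype X] (p q : X → ℝ) : EReal :=
  if ∀ x, p x ≠ 0 → q x ≠ 0 then ((∑ x, klTerm (p x) (q x) : ℝ) : EReal) else ⊤

/-- The divergence from `p` to a set `M` of distributions: `inf_{q ∈ M} D(p‖q)`. -/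
noncomputable def KLset {X : Type*} [Fintype X] (p : X → ℝ) (M : Set (X → ℝ)) : EReal :=
  ⨅ q ∈ M, KL p q

/-- The visible distribution `p_{W,C,B}` of an RBM with `n` visible and `m` hidden units. -/
noncomputable def rbmDist (n m : ℕ) (W : Matrix (Fin m) (Fin n) ℝ) (C : Fin m → ℝ)
    (B : Fin n → ℝ) : (Fin n → Bool) → ℝ := fun v =>
  (∑ h : Fin m → Bool,
      Real.exp ((∑ j, ∑ i, bval (h j) * W j i * bval (v i)) +
        (∑ j, C j * bval (h j)) + (∑ i, B i * bval (v i)))) /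
  (∑ v' : Fin n → Bool, ∑ h : Fin m → Bool,
      Real.exp ((∑ j, ∑ i, bval (h j) * W j i * bval (v' i)) +
        (∑ j, C j * bval (h j)) + (∑ i, B i * bval (v' i))))

/-- The RBM model `RBM_{n,m}`: the closure (in `ℝ^{{0,1}^n}`) of the set of visible
distributions representable with some choice of the parameters. -/
noncomputable def RBM (n m : ℕ) : Set ((Fin n → Bool) → ℝ) :=
  closure { p | ∃ (W : Matrix (Fin m) (Fin n) ℝ) (C : Fin m → ℝ) (B : Fin n → ℝ),
    p = rbmDist n m W C B }

/-- `p` is a product distribution on `{0,1}^n`. -/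
def IsProductDist {n : ℕ} (p : (Fin n → Bool) → ℝ) : Prop :=
  ∃ f : Fin n → Bool → ℝ, (∀ i, IsProb (f i)) ∧ ∀ v, p v = ∏ i, f i (v i)

/-- A face (cubical subset) of the `n`-cube: the coordinates outside `I` are fixed to `u`. -/
def IsFace {n : ℕ} (F : Set (Fin n → Bool)) : Prop :=
  ∃ (I : Finset (Fin n)) (u : Fin n → Bool), F = {x | ∀ i ∉ I, x i = u i}

/-- An edge of the `n`-cube: a pair of vectors differing in exactly one entry. -/
def IsEdge {n : ℕ} (E : Set (Fin n → Bool)) : Prop :=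
  ∃ (x : Fin n → Bool) (i : Fin n), E = {x, Function.update x i (!x i)}
/-- (Corollary 1 of the paper.) For a partition `ξ = {X₁,…,X_m}` (blocks
`B i`) of a finite set `X`, the maximal KL divergence to the partition model `P_ξ` equals
`max_i log₂ |Xᵢ|`. -/
theorem max_kl_partition_model {X : Type*} [Fintype X] (m : ℕ)
    (B : Fin m → Finset X) (hne : ∀ i, (B i).Nonempty)
    (hdisj : ∀ i j, i ≠ j → Disjoint (B i) (B j))
    (hcover : ∀ x, ∃ i, x ∈ B i)
    (Pξ : Set (X → ℝ))
    (hPξ : Pξ = {q | IsProb q ∧ ∀ i, ∀ x ∈ B i, ∀ y ∈ B i, q x = q y}) :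
    (⨆ p ∈ {p : X → ℝ | IsProb p}, KLset p Pξ) =
      ⨆ i, ((Real.logb 2 ((B i).card) : ℝ) : EReal) := by
  classical
  -- choose for each x a block containing it
  choose idx hidxmem using hcover
  have hidx_eq : ∀ (i : Fin m) (x : X), x ∈ B i → idx x = i := by
    intro i x hx
    by_contra h
    exact (Finset.disjoint_left.1 (hdisj (idx x) i h)) (hidxmem x) hx
  -- block decomposition of sums
  have hsum_blocks : ∀ f : X → ℝ, ∑ x, f x = ∑ i, ∑ x ∈ B i, f x := by
    intro f
    have huniv : (Finset.univ : Finset X) = Finset.univ.biUnion B := by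
      ext x
      simp only [Finset.mem_univ, Finset.mem_biUnion, true_iff, true_and]
      exact ⟨idx x, hidxmem x⟩
    rw [huniv, Finset.sum_biUnion]
    intro i _ j _ hij
    exact hdisj i j hij
  have hcardpos : ∀ i, (0 : ℝ) < ((B i).card : ℝ) := by
    intro i
    exact_mod_cast Finset.card_pos.2 (hne i)
  apply le_antisymm
  · -- upper bound
    apply iSup₂_le
    intro p hp
    have hp0 : ∀ x, 0 ≤ p x := hp.1
    have hp1 : ∑ x, p x = 1 := hp.2
    -- X is nonempty
    have hXne : Nonempty X := by
      by_contra h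
      rw [not_nonempty_iff] at h
      rw [Finset.univ_eq_empty, Finset.sum_empty] at hp1
      exact zero_ne_one hp1
    have hmne : Nonempty (Fin m) := ⟨idx (Classical.arbitrary X)⟩
    obtain ⟨imax, himax⟩ := Finite.exists_max (fun i => (B i).card)
    set L : ℝ := Real.logb 2 ((B imax).card) with hL
    have hlogle : ∀ i, Real.logb 2 ((B i).card) ≤ L := by
      intro i
      exact Real.logb_le_logb_of_le one_lt_two (hcardpos i) (by exact_mod_cast himax i)
    -- the projection q
    set S : Fin m → ℝ := fun i => ∑ x ∈ B i, p x with hS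
    have hSnn : ∀ i, 0 ≤ S i := fun i => Finset.sum_nonneg fun x _ => hp0 x
    have hpleS : ∀ x, p x ≤ S (idx x) := by
      intro x
      exact Finset.single_le_sum (fun y _ => hp0 y) (hidxmem x)
    set q : X → ℝ := fun x => S (idx x) / ((B (idx x)).card : ℝ) with hq
    have hq0 : ∀ x, 0 ≤ q x := fun x => div_nonneg (hSnn _) (le_of_lt (hcardpos _))
    have hqconst : ∀ i, ∀ x ∈ B i, q x = S i / ((B i).card : ℝ) := by
      intro i x hx
      simp only [hq, hidx_eq i x hx]
    have hqsum : ∑ x, q x = 1 := by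
      rw [hsum_blocks q]
      have : ∀ i, ∑ x ∈ B i, q x = S i := by
        intro i
        rw [Finset.sum_congr rfl (fun x hx => hqconst i x hx), Finset.sum_const,
          nsmul_eq_mul]
        field_simp
      rw [Finset.sum_congr rfl (fun i _ => this i), ← hsum_blocks p, hp1]
    have hqmem : q ∈ Pξ := by
      rw [hPξ]
      refine ⟨⟨hq0, hqsum⟩, ?_⟩
      intro i x hx y hy
      rw [hqconst i x hx, hqconst i y hy]
    -- support condition
    have hqpos : ∀ x, p x ≠ 0 → 0 < q x := by
      intro x hx
      have hpx : 0 < p x := lt_of_le_of_ne (hp0 x) (Ne.symm hx)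
      exact div_pos (lt_of_lt_of_le hpx (hpleS x)) (hcardpos _)
    have hsupp : ∀ x, p x ≠ 0 → q x ≠ 0 := fun x hx => ne_of_gt (hqpos x hx)
    -- KL p q ≤ L
    have hterm : ∀ x, klTerm (p x) (q x) ≤ p x * L := by
      intro x
      by_cases hx : p x = 0
      · simp [klTerm, hx]
      · have hpx : 0 < p x := lt_of_le_of_ne (hp0 x) (Ne.symm hx)
        have hqx : 0 < q x := hqpos x hx
        have hratio : p x / q x ≤ ((B (idx x)).card : ℝ) := by
          rw [hq, div_div_eq_mul_div, div_le_iff₀ (lt_of_lt_of_le hpx (hpleS x))]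
          calc p x * ((B (idx x)).card : ℝ) ≤ S (idx x) * ((B (idx x)).card : ℝ) :=
                mul_le_mul_of_nonneg_right (hpleS x) (le_of_lt (hcardpos _))
            _ = ((B (idx x)).card : ℝ) * S (idx x) := mul_comm _ _
        have hlog : Real.logb 2 (p x / q x) ≤ L := by
          calc Real.logb 2 (p x / q x) ≤ Real.logb 2 ((B (idx x)).card : ℝ) :=
                Real.logb_le_logb_of_le one_lt_two (div_pos hpx hqx) hratio
            _ ≤ L := hlogle _
        simp only [klTerm, hx, if_false]
        exact mul_le_mul_of_nonneg_left hlog (hp0 x)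
    have hsumle : ∑ x, klTerm (p x) (q x) ≤ L := by
      calc ∑ x, klTerm (p x) (q x) ≤ ∑ x, p x * L :=
            Finset.sum_le_sum fun x _ => hterm x
        _ = (∑ x, p x) * L := by rw [Finset.sum_mul]
        _ = L := by rw [hp1, one_mul]
    calc KLset p Pξ ≤ KL p q := biInf_le _ hqmem
      _ = ((∑ x, klTerm (p x) (q x) : ℝ) : EReal) := by rw [KL, if_pos hsupp]
      _ ≤ ((L : ℝ) : EReal) := by exact_mod_cast hsumle
      _ ≤ ⨆ i, ((Real.logb 2 ((B i).card) : ℝ) : EReal) :=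
          le_iSup_of_le imax (le_of_eq (by rw [hL]))
  · -- lower bound
    apply iSup_le
    intro i
    obtain ⟨x₀, hx₀⟩ := hne i
    set p : X → ℝ := fun x => if x = x₀ then 1 else 0 with hpdef
    have hpmem : p ∈ {p : X → ℝ | IsProb p} := by
      refine ⟨fun x => ?_, ?_⟩
      · by_cases h : x = x₀ <;> simp [hpdef, h]
      · simp [hpdef]
    apply le_iSup₂_of_le p hpmem
    rw [KLset]
    apply le_iInf₂
    intro q hq
    rw [hPξ] at hq
    obtain ⟨⟨hq0, hq1⟩, hqconst⟩ := hq
    rw [KL]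
    by_cases hsupp : ∀ x, p x ≠ 0 → q x ≠ 0
    · rw [if_pos hsupp]
      have hqx₀ : q x₀ ≠ 0 := hsupp x₀ (by simp [hpdef])
      have hqx₀pos : 0 < q x₀ := lt_of_le_of_ne (hq0 x₀) (Ne.symm hqx₀)
      -- card (B i) * q x₀ ≤ 1
      have hcardq : ((B i).card : ℝ) * q x₀ ≤ 1 := by
        have h1 : ∑ x ∈ B i, q x = ((B i).card : ℝ) * q x₀ := by
          rw [Finset.sum_congr rfl (fun x hx => hqconst i x hx x₀ hx₀),
            Finset.sum_const, nsmul_eq_mul]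
        have h2 : ∑ x ∈ B i, q x ≤ ∑ x, q x :=
          Finset.sum_le_sum_of_subset_of_nonneg (Finset.subset_univ _)
            (fun x _ _ => hq0 x)
        rw [← h1, ← hq1] at *
        exact h2
      have hsum : ∑ x, klTerm (p x) (q x) = Real.logb 2 (1 / q x₀) := by
        rw [Finset.sum_eq_single x₀]
        · simp [klTerm, hpdef]
        · intro x _ hx
          simp [klTerm, hpdef, hx]
        · intro h
          exact absurd (Finset.mem_univ x₀) h
      rw [hsum]
      have hlb : Real.logb 2 (((B i).card : ℝ)) ≤ Real.logb 2 (1 / q x₀) := by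
        apply Real.logb_le_logb_of_le one_lt_two (hcardpos i)
        rw [le_div_iff₀ hqx₀pos]
        exact hcardq
      exact_mod_cast hlb
    · rw [if_neg hsupp]
      exact le_top
end
end

section
/- Let ξ = {X₁, …, X_m} be a partition of X = {0,1}^n into cubical sets, each of cardinality at least 2. For each i let E_i be the independence model on X_i (product distributions supported on the face X_i), and let M be the mixture of E₁, …, E_m, i.e., the set of all Σ_i α_i p_i with p_i ∈ E_i, α_i ≥ 0, Σ_i α_i = 1. Then D_M = max_{i=1,…,m} log₂(|X_i|) - 1. -/
open scoped BigOperators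

noncomputable section

lemma klTerm_le_of_le {a g : ℝ} (k : ℕ) (ha : 0 ≤ a) (hag : a ≤ g) :
    klTerm a (g * (1/2 : ℝ) ^ k) ≤ a * k := by
  by_cases h : a = 0
  · simp [klTerm, h]
  have ha' : 0 < a := lt_of_le_of_ne ha (Ne.symm h)
  have hg : 0 < g := lt_of_lt_of_le ha' hag
  have hrw : a / (g * (1/2 : ℝ)^k) = (a/g) * 2^k := by
    rw [div_mul_eq_div_div, div_eq_iff (by positivity), mul_assoc, ← mul_pow]
    norm_num
  rw [klTerm, if_neg h, hrw, Real.logb_mul (by positivity) (by positivity), Real.logb_pow,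
    Real.logb_self_eq_one]
  have h0 : Real.logb 2 (a/g) ≤ 0 :=
    Real.logb_nonpos (by norm_num) (by positivity) (div_le_one_of_le₀ hag hg.le)
  have := mul_le_mul_of_nonneg_left h0 ha
  · nlinarith
  · norm_num

lemma face_ncard {n : ℕ} (I : Finset (Fin n)) (u : Fin n → Bool) :
    ({x : Fin n → Bool | ∀ j ∉ I, x j = u j}).ncard = 2 ^ I.card := by
  classical
  rw [← Nat.card_coe_set_eq]
  have e : {x : Fin n → Bool | ∀ j ∉ I, x j = u j} ≃ ({j // j ∈ I} → Bool) :=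
  { toFun := fun x j => x.1 j.1
    invFun := fun g => ⟨fun j => if h : j ∈ I then g ⟨j, h⟩ else u j, fun j hj => dif_neg hj⟩
    left_inv := by
      rintro ⟨x, hx⟩
      ext j
      by_cases h : j ∈ I
      · simp [h]
      · simp [h, hx j h]
    right_inv := fun g => by
      funext j
      simp }
  rw [Nat.card_congr e, Nat.card_eq_fintype_card]
  simp [Fintype.card_fun]

lemma sum_prod_pi {n : ℕ} (f : Fin n → Bool → ℝ) :
    ∑ v : Fin n → Bool, ∏ j, f j (v j) = ∏ j, ∑ b, f j b := by
  classical
  rw [Finset.prod_univ_sum fun _ => (Finset.univ : Finset Bool), Fintype.piFinset_univ]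

/-- (Corollary 2 of the paper.) Let `ξ = {X₁,…,X_m}` be a partition of
`{0,1}^n` into cubical sets of cardinality at least 2, let `E i` be the independence model on
`X i` (product distributions supported on the face `X i`), and let `M` be their mixture. Then
`D_M = max_i log₂|Xᵢ| - 1`. -/
theorem max_kl_mixture_of_products_on_cubical_partition (n m : ℕ)
    (X : Fin m → Set (Fin n → Bool)) (hface : ∀ i, IsFace (X i))
    (hcard : ∀ i, 2 ≤ (X i).ncard)
    (hdisj : ∀ i j, i ≠ j → Disjoint (X i) (X j))
    (hcover : ∀ v, ∃ i, v ∈ X i)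
    (E : Fin m → Set ((Fin n → Bool) → ℝ))
    (hE : ∀ i, E i = {q | IsProb q ∧ IsProductDist q ∧ ∀ x ∉ X i, q x = 0})
    (M : Set ((Fin n → Bool) → ℝ))
    (hMdef : M = {q | ∃ (α : Fin m → ℝ) (r : Fin m → (Fin n → Bool) → ℝ),
        (∀ i, 0 ≤ α i) ∧ (∑ i, α i = 1) ∧ (∀ i, r i ∈ E i) ∧
        q = fun x => ∑ i, α i * r i x}) :
    (⨆ p ∈ {p : (Fin n → Bool) → ℝ | IsProb p}, KLset p (closure M)) =
      ⨆ i, ((Real.logb 2 ((X i).ncard) - 1 : ℝ) : EReal) := by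

  classical
  obtain ⟨i0, hi0⟩ := hcover (fun _ => false)
  choose I u hXeq using hface
  set d : Fin m → ℕ := fun i => (I i).card with hdd
  have hncard : ∀ i, (X i).ncard = 2 ^ d i := fun i => by
    rw [hXeq i]; exact face_ncard _ _
  have hd1 : ∀ i, 1 ≤ d i := by
    intro i
    by_contra h
    push_neg at h
    have hd0 : d i = 0 := Nat.lt_one_iff.mp h
    have := hcard i
    rw [hncard i, hd0] at this
    norm_num at this
  set L : Fin m → ℝ := fun i => (d i : ℝ) - 1 with hLdef
  have hL : ∀ i, ((Real.logb 2 ((X i).ncard) - 1 : ℝ) : EReal) = ((L i : ℝ) : EReal) := by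
    intro i
    have : Real.logb 2 ((X i).ncard) = (d i : ℝ) := by
      rw [hncard i]
      push_cast
      rw [Real.logb_pow, Real.logb_self_eq_one] <;> norm_num
    rw [this]
  simp only [hL]
  -- index-of-class function
  set ix : (Fin n → Bool) → Fin m := fun x => Classical.choose (hcover x) with hixdef
  have hix : ∀ x, x ∈ X (ix x) := fun x => Classical.choose_spec (hcover x)
  have hix_eq : ∀ x i, x ∈ X i → ix x = i := by
    intro x i hxi
    by_contra h
    exact Set.disjoint_left.mp (hdisj _ _ h) (hix x) hxi
  have hL0 : ∀ i, (0:ℝ) ≤ L i := by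
    intro i
    have := hd1 i
    simp only [hLdef, sub_nonneg]
    exact_mod_cast this
  apply le_antisymm
  · -- upper bound
    apply iSup₂_le
    intro p hp
    -- upper bound
    simp only [Set.mem_setOf_eq] at hp
    have hInonempty : ∀ i, (I i).Nonempty := fun i => Finset.card_pos.mp (hd1 i)
    choose j0 hj0 using hInonempty
    set A : Fin m → Finset (Fin n → Bool) := fun i => Finset.univ.filter (fun x => ix x = i) with hAdef
    set α : Fin m → ℝ := fun i => ∑ x ∈ A i, p x with hαdef
    have hα0 : ∀ i, 0 ≤ α i := fun i => Finset.sum_nonneg (fun x _ => hp.1 x)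
    have hαsum : ∑ i, α i = 1 := by
      simp only [hαdef, hAdef]
      exact (Finset.sum_fiberwise Finset.univ ix p).trans hp.2
    set g : Fin m → Bool → ℝ := fun i b => ∑ x ∈ (A i).filter (fun x => x (j0 i) = b), p x with hgdef
    have hg0 : ∀ i b, 0 ≤ g i b := fun i b => Finset.sum_nonneg (fun x _ => hp.1 x)
    have hgsum : ∀ i, g i false + g i true = α i := by
      intro i
      have h := Finset.sum_fiberwise (A i) (fun x => x (j0 i)) p
      rw [Fintype.sum_bool] at h
      simp only [hgdef, hαdef]
      linarith [h]
    set f : Fin m → Fin n → Bool → ℝ := fun i j b =>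
      if j ∈ I i then (if j = j0 i then (if α i = 0 then 1/2 else g i b / α i) else 1/2)
      else (if b = u i j then 1 else 0) with hfdef
    have hfnn : ∀ i j b, 0 ≤ f i j b := by
      intro i j b
      simp only [hfdef]
      split
      · split
        · split
          · norm_num
          · exact div_nonneg (hg0 i b) (hα0 i)
        · norm_num
      · split <;> norm_num
    have hfsum : ∀ i j, ∑ b, f i j b = 1 := by
      intro i j
      rw [Fintype.sum_bool]
      simp only [hfdef]
      by_cases h1 : j ∈ I i
      · rw [if_pos h1, if_pos h1]
        by_cases h2 : j = j0 i
        · rw [if_pos h2, if_pos h2]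
          by_cases h3 : α i = 0
          · rw [if_pos h3, if_pos h3]; norm_num
          · rw [if_neg h3, if_neg h3, ← add_div,
              show g i true + g i false = α i by linarith [hgsum i]]
            exact div_self h3
        · rw [if_neg h2, if_neg h2]; norm_num
      · rw [if_neg h1, if_neg h1]
        cases hu : u i j <;> simp [hu]
    set r : Fin m → (Fin n → Bool) → ℝ := fun i v => ∏ j, f i j (v j) with hrdef
    have hrnn : ∀ i v, 0 ≤ r i v := fun i v => Finset.prod_nonneg (fun j _ => hfnn i j _)
    have hrzero : ∀ i x, x ∉ X i → r i x = 0 := by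
      intro i x hx
      rw [hXeq i] at hx
      simp only [Set.mem_setOf_eq] at hx
      push_neg at hx
      obtain ⟨j, hjI, hju⟩ := hx
      apply Finset.prod_eq_zero (Finset.mem_univ j)
      simp only [hfdef]
      rw [if_neg hjI, if_neg hju]
    have hrE : ∀ i, r i ∈ E i := by
      intro i
      rw [hE i]
      refine ⟨⟨hrnn i, ?_⟩, ⟨f i, fun j => ⟨hfnn i j, hfsum i j⟩, fun v => rfl⟩,
        fun x hx => hrzero i x hx⟩
      simp only [hrdef]
      rw [sum_prod_pi, Finset.prod_congr rfl (fun j _ => hfsum i j)]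
      exact Finset.prod_const_one
    set q : (Fin n → Bool) → ℝ := fun x => ∑ i, α i * r i x with hqdef
    have hqM : q ∈ M := by rw [hMdef]; exact ⟨α, r, hα0, hαsum, hrE, rfl⟩
    have hxA : ∀ x, x ∈ A (ix x) := by
      intro x
      exact Finset.mem_filter.mpr ⟨Finset.mem_univ x, rfl⟩
    have hple : ∀ x, p x ≤ g (ix x) (x (j0 (ix x))) := by
      intro x
      exact Finset.single_le_sum (fun y _ => hp.1 y) (Finset.mem_filter.mpr ⟨hxA x, rfl⟩)
    have hpleα : ∀ x, p x ≤ α (ix x) := fun x =>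
      Finset.single_le_sum (fun y _ => hp.1 y) (hxA x)
    have hqval : ∀ x, q x = α (ix x) * r (ix x) x := by
      intro x
      simp only [hqdef]
      apply Finset.sum_eq_single
      · intro j _ hj
        have hxj : x ∉ X j := fun hmem => hj (hix_eq x j hmem).symm
        rw [hrzero j x hxj, mul_zero]
      · intro h; exact absurd (Finset.mem_univ _) h
    have hrval : ∀ x, α (ix x) ≠ 0 →
        α (ix x) * r (ix x) x = g (ix x) (x (j0 (ix x))) * (1/2 : ℝ)^(d (ix x) - 1) := by
      intro x hα
      have hxX : x ∈ X (ix x) := hix x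
      have hxu : ∀ j ∉ I (ix x), x j = u (ix x) j := by rw [hXeq (ix x)] at hxX; exact hxX
      have hprod : r (ix x) x = (g (ix x) (x (j0 (ix x))) / α (ix x)) * (1/2 : ℝ)^(d (ix x) - 1) := by
        simp only [hrdef]
        rw [← Finset.prod_mul_prod_compl (I (ix x)) (fun j => f (ix x) j (x j))]
        have hcompl : ∏ j ∈ (I (ix x))ᶜ, f (ix x) j (x j) = 1 := by
          apply Finset.prod_eq_one
          intro j hj
          rw [Finset.mem_compl] at hj
          simp only [hfdef]
          rw [if_neg hj, if_pos (hxu j hj)]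
        have hIn : ∏ j ∈ I (ix x), f (ix x) j (x j)
            = (g (ix x) (x (j0 (ix x))) / α (ix x)) * (1/2:ℝ)^(d (ix x) - 1) := by
          rw [← Finset.mul_prod_erase (I (ix x)) _ (hj0 (ix x))]
          have h1 : f (ix x) (j0 (ix x)) (x (j0 (ix x)))
              = g (ix x) (x (j0 (ix x))) / α (ix x) := by
            simp only [hfdef]
            rw [if_pos (hj0 (ix x))]
            simp [hα]
          have h2 : ∏ j ∈ (I (ix x)).erase (j0 (ix x)), f (ix x) j (x j)
              = (1/2:ℝ)^(d (ix x) - 1) := by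
            have heach : ∀ j ∈ (I (ix x)).erase (j0 (ix x)), f (ix x) j (x j) = 1/2 := by
              intro j hj
              obtain ⟨hjne, hjI⟩ := Finset.mem_erase.mp hj
              simp only [hfdef]
              rw [if_pos hjI, if_neg hjne]
            rw [Finset.prod_congr rfl heach, Finset.prod_const,
              Finset.card_erase_of_mem (hj0 (ix x))]
          rw [h1, h2]
        rw [hcompl, hIn, mul_one]
      rw [hprod, ← mul_assoc, mul_div_cancel₀ _ hα]
    have hqpos : ∀ x, p x ≠ 0 → q x ≠ 0 := by
      intro x hpx
      have hpx' : 0 < p x := lt_of_le_of_ne (hp.1 x) (Ne.symm hpx)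
      have hα : α (ix x) ≠ 0 := by
        intro h
        have := hpleα x
        rw [h] at this
        linarith
      rw [hqval x, hrval x hα]
      have hgx : 0 < g (ix x) (x (j0 (ix x))) := lt_of_lt_of_le hpx' (hple x)
      positivity
    have hterm : ∀ x, klTerm (p x) (q x) ≤ p x * L (ix x) := by
      intro x
      by_cases hpx : p x = 0
      · simp [klTerm, hpx]
      · have hpx' : 0 < p x := lt_of_le_of_ne (hp.1 x) (Ne.symm hpx)
        have hα : α (ix x) ≠ 0 := by
          intro h
          have := hpleα x
          rw [h] at this
          linarith
        rw [hqval x, hrval x hα]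
        refine le_trans (klTerm_le_of_le (d (ix x) - 1) (hp.1 x) (hple x)) ?_
        have hcast : ((d (ix x) - 1 : ℕ) : ℝ) = L (ix x) := by
          simp only [hLdef]
          rw [Nat.cast_sub (hd1 (ix x))]
          norm_num
        rw [hcast]
    obtain ⟨imax, _, hmax⟩ := Finset.exists_max_image Finset.univ L ⟨i0, Finset.mem_univ i0⟩
    have hsum_le : ∑ x, klTerm (p x) (q x) ≤ L imax := by
      calc ∑ x, klTerm (p x) (q x) ≤ ∑ x, p x * L imax := by
            apply Finset.sum_le_sum
            intro x _
            exact le_trans (hterm x)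
              (mul_le_mul_of_nonneg_left (hmax (ix x) (Finset.mem_univ _)) (hp.1 x))
        _ = L imax := by rw [← Finset.sum_mul, hp.2, one_mul]
    have hKLq : KL p q = ((∑ x, klTerm (p x) (q x) : ℝ) : EReal) := by
      rw [KL, if_pos hqpos]
    calc KLset p (closure M) ≤ KL p q := by
          rw [KLset]
          exact iInf₂_le q (subset_closure hqM)
      _ ≤ ((L imax : ℝ) : EReal) := by
          rw [hKLq]
          exact EReal.coe_le_coe_iff.mpr hsum_le
      _ ≤ ⨆ i, ((L i : ℝ) : EReal) := le_iSup (fun i => ((L i : ℝ) : EReal)) imax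

  · -- lower bound
    apply iSup_le
    intro i
    -- lower bound for class i
    simp only [Set.mem_setOf_eq]
    set x0 : Fin n → Bool := fun j => if j ∈ I i then false else u i j with hx0def
    set x1 : Fin n → Bool := fun j => if j ∈ I i then true else u i j with hx1def
    have hx0 : x0 ∈ X i := by rw [hXeq]; intro j hj; simp [hx0def, hj]
    have hx1 : x1 ∈ X i := by rw [hXeq]; intro j hj; simp [hx1def, hj]
    have hne : x0 ≠ x1 := by
      obtain ⟨j, hj⟩ := Finset.card_pos.mp (hd1 i)
      intro h
      have := congrFun h j
      simp [hx0def, hx1def, hj] at this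
    set p : (Fin n → Bool) → ℝ := fun x => if x ∈ ({x0, x1} : Finset (Fin n → Bool)) then 1/2 else 0 with hpdef
    have hp : IsProb p := by
      constructor
      · intro x; simp only [hpdef]; split <;> norm_num
      · rw [hpdef]
        rw [Finset.sum_ite_mem, Finset.univ_inter, Finset.sum_const, Finset.card_pair hne]
        norm_num
    have hp0 : p x0 = 1/2 := by simp [hpdef]
    have hp1 : p x1 = 1/2 := by simp [hpdef]
    set c : ℝ := (1/4 : ℝ) ^ (d i) with hcdef
    set C : Set ((Fin n → Bool) → ℝ) := {q | 0 ≤ q x0 ∧ 0 ≤ q x1 ∧ q x0 * q x1 ≤ c} with hCdef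
    have hCclosed : IsClosed C := by
      have h1 : IsClosed {q : (Fin n → Bool) → ℝ | 0 ≤ q x0} :=
        isClosed_le continuous_const (continuous_apply x0)
      have h2 : IsClosed {q : (Fin n → Bool) → ℝ | 0 ≤ q x1} :=
        isClosed_le continuous_const (continuous_apply x1)
      have h3 : IsClosed {q : (Fin n → Bool) → ℝ | q x0 * q x1 ≤ c} :=
        isClosed_le ((continuous_apply x0).mul (continuous_apply x1)) continuous_const
      have : C = ({q : (Fin n → Bool) → ℝ | 0 ≤ q x0} ∩ {q | 0 ≤ q x1}) ∩ {q | q x0 * q x1 ≤ c} := by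
        ext q; simp only [hCdef, Set.mem_setOf_eq, Set.mem_inter_iff]; tauto
      rw [this]
      exact (h1.inter h2).inter h3
    have hMC : M ⊆ C := by
      rw [hMdef]
      rintro q ⟨α, r, hα0, hα1, hrE, rfl⟩
      have hrprops : ∀ j, IsProb (r j) ∧ IsProductDist (r j) ∧ ∀ x ∉ X j, r j x = 0 := by
        intro j
        have := hrE j
        rw [hE j] at this
        exact this
      have hzero : ∀ (x : Fin n → Bool), x ∈ X i → ∀ j, j ≠ i → α j * r j x = 0 := by
        intro x hxX j hj
        have : x ∉ X j := fun hmem => Set.disjoint_left.mp (hdisj j i hj) hmem hxX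
        rw [(hrprops j).2.2 x this, mul_zero]
      have hq0 : (∑ j, α j * r j x0) = α i * r i x0 :=
        Finset.sum_eq_single i (fun j _ hj => hzero x0 hx0 j hj) (fun h => absurd (Finset.mem_univ i) h)
      have hq1 : (∑ j, α j * r j x1) = α i * r i x1 :=
        Finset.sum_eq_single i (fun j _ hj => hzero x1 hx1 j hj) (fun h => absurd (Finset.mem_univ i) h)
      obtain ⟨f, hf, hrf⟩ := (hrprops i).2.1
      have hfnn : ∀ j b, 0 ≤ f j b := fun j b => (hf j).1 b
      have hfsum : ∀ j, f j false + f j true = 1 := by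
        intro j
        have := (hf j).2
        rw [Fintype.sum_bool] at this
        linarith
      have hf1 : ∀ j b, f j b ≤ 1 := by
        intro j b
        have h1 := hfnn j false
        have h2 := hfnn j true
        have := hfsum j
        cases b <;> linarith
      have hrnn : ∀ v, 0 ≤ r i v := by
        intro v; rw [hrf]; exact Finset.prod_nonneg (fun j _ => hfnn j _)
      have key : r i x0 * r i x1 ≤ c := by
        rw [hrf, hrf, ← Finset.prod_mul_distrib]
        rw [← Finset.prod_mul_prod_compl (I i) (fun j => f j (x0 j) * f j (x1 j))]
        have hb1 : ∏ j ∈ I i, f j (x0 j) * f j (x1 j) ≤ ∏ _j ∈ I i, (1/4 : ℝ) := by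
          apply Finset.prod_le_prod
          · intro j _; exact mul_nonneg (hfnn j _) (hfnn j _)
          · intro j hj
            have h0 : x0 j = false := by simp [hx0def, hj]
            have h1 : x1 j = true := by simp [hx1def, hj]
            rw [h0, h1]
            nlinarith [hfnn j false, hfnn j true, hfsum j, sq_nonneg (f j false - f j true)]
        have hb2 : ∏ j ∈ (I i)ᶜ, f j (x0 j) * f j (x1 j) ≤ 1 := by
          apply Finset.prod_le_one
          · intro j _; exact mul_nonneg (hfnn j _) (hfnn j _)
          · intro j _
            nlinarith [hfnn j (x0 j), hfnn j (x1 j), hf1 j (x0 j), hf1 j (x1 j)]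
        have hnn2 : (0:ℝ) ≤ ∏ j ∈ (I i)ᶜ, f j (x0 j) * f j (x1 j) :=
          Finset.prod_nonneg (fun j _ => mul_nonneg (hfnn j _) (hfnn j _))
        have hnn1 : (0:ℝ) ≤ ∏ j ∈ I i, f j (x0 j) * f j (x1 j) :=
          Finset.prod_nonneg (fun j _ => mul_nonneg (hfnn j _) (hfnn j _))
        calc (∏ j ∈ I i, f j (x0 j) * f j (x1 j)) * ∏ j ∈ (I i)ᶜ, f j (x0 j) * f j (x1 j)
            ≤ (∏ _j ∈ I i, (1/4:ℝ)) * 1 := mul_le_mul hb1 hb2 hnn2 (by positivity)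
          _ = c := by rw [Finset.prod_const, mul_one, hcdef, hdd]
      have hαle : α i ≤ 1 := hα1 ▸ Finset.single_le_sum (fun j _ => hα0 j) (Finset.mem_univ i)
      simp only [hCdef, Set.mem_setOf_eq]
      refine ⟨?_, ?_, ?_⟩
      · rw [hq0]; exact mul_nonneg (hα0 i) (hrnn x0)
      · rw [hq1]; exact mul_nonneg (hα0 i) (hrnn x1)
      · rw [hq0, hq1]
        have hcnn : (0:ℝ) ≤ c := by positivity
        calc α i * r i x0 * (α i * r i x1) = (α i * α i) * (r i x0 * r i x1) := by ring
          _ ≤ 1 * c := by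
              apply mul_le_mul _ key (mul_nonneg (hrnn x0) (hrnn x1)) (by norm_num)
              nlinarith [hα0 i]
          _ = c := one_mul c
    have hclosureC : closure M ⊆ C := closure_minimal hMC hCclosed
    have hKLq : ∀ q ∈ closure M, ((L i : ℝ) : EReal) ≤ KL p q := by
      intro q hq
      obtain ⟨hq0, hq1, hqc⟩ := hclosureC hq
      rw [KL]
      by_cases hsupp : ∀ x, p x ≠ 0 → q x ≠ 0
      · rw [if_pos hsupp]
        have hq0' : 0 < q x0 := lt_of_le_of_ne hq0 (Ne.symm (hsupp x0 (by rw [hp0]; norm_num)))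
        have hq1' : 0 < q x1 := lt_of_le_of_ne hq1 (Ne.symm (hsupp x1 (by rw [hp1]; norm_num)))
        have hsum : ∑ x, klTerm (p x) (q x) = klTerm (1/2) (q x0) + klTerm (1/2) (q x1) := by
          rw [← Finset.sum_subset (Finset.subset_univ ({x0, x1} : Finset (Fin n → Bool)))
            (by
              intro x _ hx
              have hpx : p x = 0 := by simp only [hpdef]; rw [if_neg hx]
              rw [hpx]; simp [klTerm])]
          rw [Finset.sum_pair hne, hp0, hp1]
        rw [hsum, EReal.coe_le_coe_iff]
        have hl0 : klTerm (1/2) (q x0) = 1/2 * (Real.logb 2 (1/2) - Real.logb 2 (q x0)) := by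
          rw [klTerm, if_neg (by norm_num), Real.logb_div (by norm_num) (ne_of_gt hq0')]
        have hl1 : klTerm (1/2) (q x1) = 1/2 * (Real.logb 2 (1/2) - Real.logb 2 (q x1)) := by
          rw [klTerm, if_neg (by norm_num), Real.logb_div (by norm_num) (ne_of_gt hq1')]
        have hhalf : Real.logb 2 (1/2 : ℝ) = -1 := by
          rw [show (1/2:ℝ) = 2⁻¹ by norm_num, Real.logb_inv, Real.logb_self_eq_one] <;> norm_num
        have hcpos : (0:ℝ) < c := by rw [hcdef]; positivity
        have hmono : Real.logb 2 (q x0 * q x1) ≤ Real.logb 2 c :=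
          (Real.logb_le_logb (by norm_num) (by positivity) hcpos).mpr hqc
        have hprod : Real.logb 2 (q x0 * q x1) = Real.logb 2 (q x0) + Real.logb 2 (q x1) :=
          Real.logb_mul (ne_of_gt hq0') (ne_of_gt hq1')
        have hc : Real.logb 2 c = -(2 * (d i : ℝ)) := by
          have h14 : Real.logb 2 (1/4 : ℝ) = -2 := by
            rw [show (1/4:ℝ) = ((2:ℝ)^2)⁻¹ by norm_num, Real.logb_inv, Real.logb_pow,
              Real.logb_self_eq_one] <;> norm_num
          rw [hcdef, Real.logb_pow, h14]
          ring
        rw [hl0, hl1, hhalf]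
        rw [hprod, hc] at hmono
        simp only [hLdef]
        linarith
      · rw [if_neg hsupp]
        exact le_top
    refine le_trans (le_iInf₂ hKLq) ?_
    exact le_iSup₂ (f := fun p (_ : p ∈ {p : (Fin n → Bool) → ℝ | IsProb p}) => KLset p (closure M)) p hp
end
end

section
/- Let n₁, …, n_m ≥ 0 be integers with 2^{n₁} + … + 2^{n_m} = 2^n. Let M be the union, over all partitions of {0,1}^n into cubical blocks of cardinalities 2^{n₁}, …, 2^{n_m}, of the mixtures of the independence models on the blocks. Then D_M ≤ Σ_{i : n_i > 1} (n_i - 1)/2^{n - n_i}. Equivalently: for every probability distribution p on {0,1}^n there exist a partition of {0,1}^n into cubical blocks X₁, …, X_m with |X_i| = 2^{n_i} and a mixture q = Σ_i α_i q_i of product distributions q_i supported on the respective blocks X_i such that D(p‖q) ≤ Σ_{i : n_i > 1} (n_i - 1)/2^{n - n_i}. -/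
open scoped BigOperators

noncomputable section

namespace KLAux
open Finset

variable {n : ℕ}

def val {n : ℕ} (x : Fin n → Bool) : ℕ := ∑ j, if x j then 2 ^ (j : ℕ) else 0

lemma val_succ (x : Fin (n + 1) → Bool) :
    val x = (if x 0 then 1 else 0) + 2 * val (fun j => x j.succ) := by
  rw [val, Fin.sum_univ_succ, val, Finset.mul_sum]
  have h0 : (if x 0 = true then 2 ^ ((0 : Fin (n + 1)) : ℕ) else 0)
      = if x 0 = true then 1 else 0 := by simp
  rw [h0]
  congr 1
  refine Finset.sum_congr rfl fun j _ => ?_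
  rcases x j.succ with _ | _ <;> simp [pow_succ, mul_comm]

lemma val_lt (x : Fin n → Bool) : val x < 2 ^ n := by
  induction n with
  | zero => simp [val]
  | succ n ih =>
    have h := ih (fun j => x j.succ)
    rw [val_succ]
    have : (if x 0 then 1 else 0) ≤ 1 := by split <;> simp
    rw [pow_succ]
    omega

lemma testBit_val : ∀ {n : ℕ} (x : Fin n → Bool) (j : Fin n), (val x).testBit j = x j := by
  intro n
  induction n with
  | zero => exact fun x j => j.elim0
  | succ n ih =>
    intro x j
    rw [val_succ]
    refine Fin.cases ?_ (fun k => ?_) j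
    · rcases h : x 0 with _ | _ <;>
        simp [h, Nat.testBit_zero, Nat.add_mul_mod_self_left]
    · have hv : ((k.succ : Fin (n + 1)) : ℕ) = (k : ℕ) + 1 := rfl
      rw [hv, Nat.testBit_add_one]
      have hd : ((if x 0 then 1 else 0) + 2 * val fun j => x j.succ) / 2
          = val (fun j => x j.succ) := by
        split <;> omega
      rw [hd, ih]

lemma val_injective : Function.Injective (val (n := n)) := by
  intro x y h
  funext j
  rw [← testBit_val x j, h, testBit_val]

lemma mem_face_iff {k c : ℕ} (hc : 2 ^ k ∣ c) (hcn : c + 2 ^ k ≤ 2 ^ n) (x : Fin n → Bool) :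
    (∀ j : Fin n, k ≤ (j : ℕ) → x j = c.testBit j) ↔ c ≤ val x ∧ val x < c + 2 ^ k := by
  obtain ⟨t, rfl⟩ := hc
  have h2k : 0 < 2 ^ k := Nat.two_pow_pos k
  have hcdiv : 2 ^ k * t / 2 ^ k = t := Nat.mul_div_cancel_left _ h2k
  constructor
  · intro h
    have hbit : ∀ i : ℕ, k ≤ i → (val x).testBit i = (2 ^ k * t).testBit i := by
      intro i hi
      by_cases hin : i < n
      · rw [testBit_val x ⟨i, hin⟩, h ⟨i, hin⟩ hi]
      · rw [Nat.testBit_lt_two_pow, Nat.testBit_lt_two_pow]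
        · exact lt_of_lt_of_le (by omega) (Nat.pow_le_pow_right (by norm_num) (le_of_not_gt hin))
        · exact lt_of_lt_of_le (val_lt x) (Nat.pow_le_pow_right (by norm_num) (le_of_not_gt hin))
    have hdiv : val x / 2 ^ k = t := by
      have : val x >>> k = (2 ^ k * t) >>> k := by
        apply Nat.eq_of_testBit_eq
        intro i
        rw [Nat.testBit_shiftRight, Nat.testBit_shiftRight]
        exact hbit (k + i) (Nat.le_add_right _ _)
      rw [Nat.shiftRight_eq_div_pow, Nat.shiftRight_eq_div_pow, hcdiv] at this
      exact this
    have h1 := Nat.div_add_mod (val x) (2 ^ k)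
    rw [hdiv] at h1
    have h2 := Nat.mod_lt (val x) h2k
    omega
  · rintro ⟨h1, h2⟩
    have hdiv : val x / 2 ^ k = t := by
      refine Nat.div_eq_of_lt_le (by rw [mul_comm]; omega) ?_
      rw [add_mul, one_mul, mul_comm]
      omega
    intro j hj
    rw [← testBit_val x j]
    have e1 : (val x).testBit j = (val x / 2 ^ k).testBit ((j : ℕ) - k) := by
      rw [← Nat.shiftRight_eq_div_pow, Nat.testBit_shiftRight]
      congr 1; omega
    have e2 : (2 ^ k * t).testBit j = (2 ^ k * t / 2 ^ k).testBit ((j : ℕ) - k) := by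
      rw [← Nat.shiftRight_eq_div_pow, Nat.testBit_shiftRight]
      congr 1; omega
    rw [e1, e2, hdiv, hcdiv]

lemma face_card (I : Finset (Fin n)) (u : Fin n → Bool) :
    (univ.filter fun x : Fin n → Bool => ∀ j ∉ I, x j = u j).card = 2 ^ I.card := by
  classical
  have h2 : (2 : ℕ) ^ I.card = Fintype.card (I → Bool) := by
    rw [Fintype.card_fun]
    simp
  rw [h2, ← Finset.card_univ]
  refine Finset.card_nbij' (fun x (j : I) => x j)
    (fun y j => if h : j ∈ I then y ⟨j, h⟩ else u j) (by simp) ?_ ?_ ?_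
  · intro y _
    simp only [Finset.mem_coe, mem_filter, mem_univ, true_and]
    intro j hj
    simp [hj]
  · intro x hx
    funext j
    by_cases h : j ∈ I
    · simp [h]
    · simp only [h, dif_neg, not_false_iff]
      exact ((Finset.mem_filter.1 hx).2 j h).symm
  · intro y _
    funext j
    simp [j.2]

lemma card_filter_lt (K : ℕ) (hK : K ≤ n) :
    (univ.filter fun j : Fin n => (j : ℕ) < K).card = K := by
  rcases Nat.eq_zero_or_pos K with rfl | hK0
  · simp
  have hn : 0 < n := lt_of_lt_of_le hK0 hK
  have h : (univ.filter fun j : Fin n => (j : ℕ) < K).card = (Finset.range K).card := by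
    refine Finset.card_nbij' (fun j => (j : ℕ)) (fun r => ⟨r % n, Nat.mod_lt _ hn⟩) ?_ ?_ ?_ ?_
    · intro j hj
      simp only [Finset.mem_coe, mem_filter, mem_univ, true_and] at hj
      simpa using hj
    · intro r hr
      simp only [Finset.mem_coe, Finset.mem_range] at hr
      simp only [Finset.mem_coe, mem_filter, mem_univ, true_and]
      rw [Nat.mod_eq_of_lt (by omega)]
      exact hr
    · intro j hj
      ext
      simp [Nat.mod_eq_of_lt j.isLt]
    · intro r hr
      simp only [Finset.mem_coe, Finset.mem_range] at hr
      simp [Nat.mod_eq_of_lt (show r < n by omega)]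
  rw [h, Finset.card_range]


variable {m : ℕ}

def sg (nv : Fin m → ℕ) : Equiv.Perm (Fin m) := Fin.revPerm.trans (Tuple.sort nv)

def ee (nv : Fin m → ℕ) (k : Fin m) : ℕ := nv (sg nv k)

lemma ee_antitone (nv : Fin m → ℕ) : Antitone (ee nv) := by
  intro k k' h
  exact Tuple.monotone_sort nv (Fin.rev_le_rev.2 h)

def CC (nv : Fin m → ℕ) (t : ℕ) : ℕ :=
  ∑ k ∈ univ.filter (fun k : Fin m => (k : ℕ) < t), 2 ^ ee nv k

lemma CC_zero (nv : Fin m → ℕ) : CC nv 0 = 0 := by simp [CC]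

lemma CC_succ (nv : Fin m → ℕ) {t : ℕ} (ht : t < m) :
    CC nv (t + 1) = CC nv t + 2 ^ ee nv ⟨t, ht⟩ := by
  rw [CC, CC]
  have h : (univ.filter fun k : Fin m => (k : ℕ) < t + 1)
      = insert ⟨t, ht⟩ (univ.filter fun k : Fin m => (k : ℕ) < t) := by
    ext k
    simp only [mem_filter, mem_univ, true_and, Finset.mem_insert, Fin.ext_iff]
    omega
  rw [h, Finset.sum_insert (by simp)]
  ring

lemma CC_mono (nv : Fin m → ℕ) : Monotone (CC nv) := by
  intro s t h
  exact Finset.sum_le_sum_of_subset (fun k hk => by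
    simp only [mem_filter, mem_univ, true_and] at hk ⊢; omega)

lemma CC_total {n : ℕ} (nv : Fin m → ℕ) (hsum : ∑ i, 2 ^ nv i = 2 ^ n) :
    CC nv m = 2 ^ n := by
  rw [CC]
  have h : (univ.filter fun k : Fin m => (k : ℕ) < m) = univ := by
    ext k; simp [k.isLt]
  rw [h, ← hsum]
  exact Equiv.sum_comp (sg nv) (fun i => 2 ^ nv i)

lemma CC_dvd (nv : Fin m → ℕ) (k : Fin m) : 2 ^ ee nv k ∣ CC nv k := by
  refine Finset.dvd_sum fun j hj => ?_
  simp only [mem_filter, mem_univ, true_and] at hj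
  exact pow_dvd_pow 2 (ee_antitone nv (le_of_lt (show j < k from hj)))

lemma CC_add_le {n : ℕ} (nv : Fin m → ℕ) (hsum : ∑ i, 2 ^ nv i = 2 ^ n) (k : Fin m) :
    CC nv k + 2 ^ ee nv k ≤ 2 ^ n := by
  have h1 : CC nv ((k : ℕ) + 1) = CC nv k + 2 ^ ee nv k := by
    rw [CC_succ nv k.isLt]
  rw [← h1, ← CC_total nv hsum]
  exact CC_mono nv k.isLt

lemma CC_cover {n : ℕ} (nv : Fin m → ℕ) (hsum : ∑ i, 2 ^ nv i = 2 ^ n)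
    {v : ℕ} (hv : v < 2 ^ n) :
    ∃ k : Fin m, CC nv k ≤ v ∧ v < CC nv k + 2 ^ ee nv k := by
  have hm : 0 < m := by
    by_contra h
    have : m = 0 := by omega
    subst this
    simp at hsum
    have := Nat.two_pow_pos n
    omega
  set s := (Finset.range m).filter (fun t => CC nv t ≤ v) with hs
  have hs0 : 0 ∈ s := by
    simp [hs, CC_zero, hm]
  have hne : s.Nonempty := ⟨0, hs0⟩
  set t := s.max' hne with htdef
  have hts : t ∈ s := Finset.max'_mem s hne
  simp only [hs, mem_filter, Finset.mem_range] at hts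
  obtain ⟨htm, htv⟩ := hts
  refine ⟨⟨t, htm⟩, htv, ?_⟩
  rw [← CC_succ nv htm]
  by_cases h : t + 1 < m
  · by_contra hc
    have : t + 1 ∈ s := by
      simp only [hs, mem_filter, Finset.mem_range]
      exact ⟨h, by omega⟩
    have := Finset.le_max' s _ this
    omega
  · have ht1 : t + 1 = m := by omega
    rw [ht1, CC_total nv hsum]
    exact hv


lemma klTerm_eq (a b : ℝ) : klTerm a b = a * Real.logb 2 (a / b) := by
  rw [klTerm]; split <;> simp_all

lemma key_ent (s : ℝ) : -(s * Real.logb 2 s + (1 - s) * Real.logb 2 (1 - s)) ≤ 1 := by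
  have h2 : (0 : ℝ) < Real.log 2 := Real.log_pos one_lt_two
  have hb := Real.binEntropy_le_log_two (p := s)
  have he : Real.binEntropy s = -(s * Real.log s + (1 - s) * Real.log (1 - s)) := by
    rw [Real.binEntropy, Real.log_inv, Real.log_inv]; ring
  rw [he] at hb
  have hmul : (-(s * Real.logb 2 s + (1 - s) * Real.logb 2 (1 - s))) * Real.log 2
      = -(s * Real.log s + (1 - s) * Real.log (1 - s)) := by
    rw [Real.logb, Real.logb]; field_simp
  nlinarith [hb, hmul, h2]

lemma ent_pair_le (a b w : ℝ) (ha : 0 ≤ a) (hb : 0 ≤ b) (hw : a + b = w) (hw0 : w ≠ 0) :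
    -(a * Real.logb 2 (a / w) + b * Real.logb 2 (b / w)) ≤ w := by
  have hwpos : 0 < w := lt_of_le_of_ne (by linarith) (Ne.symm hw0)
  have hs := key_ent (a / w)
  have h1 : 1 - a / w = b / w := by field_simp; linarith
  rw [h1] at hs
  have h2 := mul_le_mul_of_nonneg_left hs (le_of_lt hwpos)
  calc -(a * Real.logb 2 (a / w) + b * Real.logb 2 (b / w))
      = w * -(a / w * Real.logb 2 (a / w) + b / w * Real.logb 2 (b / w)) := by
        field_simp
    _ ≤ w * 1 := h2
    _ = w := mul_one w

variable {n : ℕ}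

lemma block_bound (p : (Fin n → Bool) → ℝ) (hp : ∀ x, 0 ≤ p x)
    (I : Finset (Fin n)) (u : Fin n → Bool) :
    ∃ q : (Fin n → Bool) → ℝ,
      IsProb q ∧ IsProductDist q ∧
      (∀ x : Fin n → Bool, ¬(∀ j ∉ I, x j = u j) → q x = 0) ∧
      (∀ x : Fin n → Bool, (∀ j ∉ I, x j = u j) → p x ≠ 0 → 0 < q x) ∧
      (∑ x ∈ univ.filter (fun x : Fin n → Bool => ∀ j ∉ I, x j = u j),
          klTerm (p x)
            ((∑ y ∈ univ.filter (fun y : Fin n → Bool => ∀ j ∉ I, y j = u j), p y) * q x))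
        ≤ (∑ y ∈ univ.filter (fun y : Fin n → Bool => ∀ j ∉ I, y j = u j), p y) *
            (if 1 < I.card then (I.card : ℝ) - 1 else 0) := by
  classical
  set F := univ.filter (fun x : Fin n → Bool => ∀ j ∉ I, x j = u j) with hF
  set w := ∑ y ∈ F, p y with hwdef
  have hw0 : 0 ≤ w := Finset.sum_nonneg fun y _ => hp y
  set g : Fin n → Bool → ℝ := fun j b =>
    if j ∈ I then (if w = 0 then 1/2 else (∑ x ∈ F.filter (fun x => x j = b), p x) / w)
    else (if b = u j then 1 else 0) with hg
  have hxF : ∀ x, (∀ j ∉ I, x j = u j) → x ∈ F := fun x hx =>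
    Finset.mem_filter.2 ⟨Finset.mem_univ x, hx⟩
  have hgnn : ∀ j b, 0 ≤ g j b := by
    intro j b
    simp only [hg]
    split
    · split
      · norm_num
      · exact div_nonneg (Finset.sum_nonneg fun x _ => hp x) hw0
    · split <;> norm_num
  have hfilt : ∀ j : Fin n, F.filter (fun y => y j = false) = F.filter (fun y => ¬y j = true) := by
    intro j
    apply Finset.filter_congr
    intro y _
    simp [Bool.not_eq_true]
  have hsplit : ∀ j : Fin n,
      (∑ y ∈ F.filter (fun y => y j = true), p y) + (∑ y ∈ F.filter (fun y => y j = false), p y)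
        = w := by
    intro j
    rw [hfilt j]
    exact Finset.sum_filter_add_sum_filter_not F (fun y => y j = true) p
  have hgsum : ∀ j, g j true + g j false = 1 := by
    intro j
    simp only [hg]
    by_cases hj : j ∈ I
    · rw [if_pos hj, if_pos hj]
      by_cases hw : w = 0
      · rw [if_pos hw, if_pos hw]; norm_num
      · rw [if_neg hw, if_neg hw, ← add_div, div_eq_one_iff_eq hw]
        exact hsplit j
    · rw [if_neg hj, if_neg hj]
      cases hu : u j <;> simp
  have gprob : ∀ j, IsProb (g j) := fun j =>
    ⟨hgnn j, by rw [Fintype.sum_bool, hgsum j]⟩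
  have hgpos_of : ∀ x, (∀ j ∉ I, x j = u j) → p x ≠ 0 → ∀ j, 0 < g j (x j) := by
    intro x hx hpx j
    have hppos : 0 < p x := lt_of_le_of_ne (hp x) (Ne.symm hpx)
    have hwx : p x ≤ w := Finset.single_le_sum (fun y _ => hp y) (hxF x hx)
    have hwpos : 0 < w := lt_of_lt_of_le hppos hwx
    simp only [hg]
    by_cases hj : j ∈ I
    · rw [if_pos hj, if_neg (ne_of_gt hwpos)]
      have hle : p x ≤ ∑ y ∈ F.filter (fun y => y j = x j), p y :=
        Finset.single_le_sum (fun y _ => hp y) (Finset.mem_filter.2 ⟨hxF x hx, rfl⟩)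
      exact div_pos (lt_of_lt_of_le hppos hle) hwpos
    · rw [if_neg hj, if_pos (hx j hj)]
      norm_num
  refine ⟨fun x => ∏ j, g j (x j), ⟨fun x => Finset.prod_nonneg fun j _ => hgnn j (x j), ?_⟩,
    ⟨g, gprob, fun v => rfl⟩, ?_, ?_, ?_⟩
  · -- sums to one
    have h1 := Finset.prod_univ_sum (fun _ : Fin n => (univ : Finset Bool)) g
    rw [Fintype.piFinset_univ] at h1
    calc ∑ x : Fin n → Bool, ∏ j, g j (x j) = ∏ j, ∑ b, g j b := h1.symm
      _ = 1 := by
          apply Finset.prod_eq_one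
          intro j _
          rw [Fintype.sum_bool, hgsum j]
  · -- vanishing outside the face
    intro x hx
    push_neg at hx
    obtain ⟨j, hj, hxj⟩ := hx
    apply Finset.prod_eq_zero (Finset.mem_univ j)
    simp only [hg]
    rw [if_neg hj, if_neg hxj]
  · -- positivity on the support
    intro x hx hpx
    exact Finset.prod_pos fun j _ => hgpos_of x hx hpx j
  · -- the main inequality
    beta_reduce
    by_cases hw : w = 0
    · have hzero : ∀ x ∈ F, p x = 0 :=
        (Finset.sum_eq_zero_iff_of_nonneg (fun y _ => hp y)).1 (by rw [← hwdef]; exact hw)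
      have : ∑ x ∈ F, klTerm (p x) (w * ∏ j, g j (x j)) = 0 := by
        apply Finset.sum_eq_zero
        intro x hx
        rw [klTerm_eq, hzero x hx, zero_mul]
      rw [this, hw, zero_mul]
    · have hwpos : 0 < w := lt_of_le_of_ne hw0 (Ne.symm hw)
      set T : Fin n → ℝ := fun j => ∑ x ∈ F, p x * Real.logb 2 (g j (x j)) with hT
      have hgj : ∀ j ∈ I, ∀ b, g j b = (∑ y ∈ F.filter (fun y => y j = b), p y) / w := by
        intro j hj b
        simp only [hg]
        rw [if_pos hj, if_neg hw]
      -- Step B : ∀ j ∈ I, -T j ≤ w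
      have hTle : ∀ j ∈ I, -T j ≤ w := by
        intro j hj
        have hTeq : T j = (∑ y ∈ F.filter (fun y => y j = true), p y) *
              Real.logb 2 ((∑ y ∈ F.filter (fun y => y j = true), p y) / w)
            + (∑ y ∈ F.filter (fun y => y j = false), p y) *
              Real.logb 2 ((∑ y ∈ F.filter (fun y => y j = false), p y) / w) := by
          rw [hT]
          dsimp only
          rw [← Finset.sum_filter_add_sum_filter_not F (fun x => x j = true)
            (fun x => p x * Real.logb 2 (g j (x j))), ← hfilt j]
          congr 1
          · rw [show (∑ x ∈ F.filter (fun x => x j = true), p x * Real.logb 2 (g j (x j)))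
                  = ∑ x ∈ F.filter (fun x => x j = true), p x * Real.logb 2 (g j true) from
                Finset.sum_congr rfl fun y hy => by rw [(Finset.mem_filter.1 hy).2],
              ← Finset.sum_mul, hgj j hj true]
          · rw [show (∑ x ∈ F.filter (fun x => x j = false), p x * Real.logb 2 (g j (x j)))
                  = ∑ x ∈ F.filter (fun x => x j = false), p x * Real.logb 2 (g j false) from
                Finset.sum_congr rfl fun y hy => by rw [(Finset.mem_filter.1 hy).2],
              ← Finset.sum_mul, hgj j hj false]
        rw [hTeq]
        exact ent_pair_le _ _ w (Finset.sum_nonneg fun y _ => hp y)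
          (Finset.sum_nonneg fun y _ => hp y) (hsplit j) hw
      rcases I.eq_empty_or_nonempty with hI | ⟨j0, hj0⟩
      · -- empty face : F = {u}
        subst hI
        have hFu : F = {u} := by
          rw [hF]
          ext x
          simp only [Finset.mem_filter, Finset.mem_univ, true_and, Finset.mem_singleton,
            Finset.notMem_empty]
          constructor
          · intro h
            exact funext fun j => h j (by simp)
          · rintro rfl
            intro j _
            rfl
        have hqu : ∏ j, g j (u j) = 1 := by
          apply Finset.prod_eq_one
          intro j _
          simp [hg]
        have hwu : w = p u := by rw [hwdef, hFu, Finset.sum_singleton]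
        rw [hFu, Finset.sum_singleton, hqu, mul_one, hwu]
        have : klTerm (p u) (p u) = 0 := by
          rw [klTerm_eq]
          by_cases hpu : p u = 0
          · rw [hpu]; ring
          · rw [div_self hpu, Real.logb_one, mul_zero]
        rw [this]
        simp
      · -- nonempty face
        -- Step 1 : decomposition
        have hdec : ∀ x ∈ F, klTerm (p x) (w * ∏ j, g j (x j))
            = klTerm (p x) w - ∑ j ∈ I, p x * Real.logb 2 (g j (x j)) := by
          intro x hx
          by_cases hpx : p x = 0
          · simp [klTerm_eq, hpx]
          · have hxface : ∀ j ∉ I, x j = u j := (Finset.mem_filter.1 hx).2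
            have hgpos := hgpos_of x hxface hpx
            have hqx : ∏ j, g j (x j) = ∏ j ∈ I, g j (x j) := by
              symm
              apply Finset.prod_subset (Finset.subset_univ I)
              intro j _ hj
              simp only [hg]
              rw [if_neg hj, if_pos (hxface j hj)]
            have hqpos : 0 < ∏ j ∈ I, g j (x j) :=
              Finset.prod_pos fun j _ => hgpos j
            have hppos : 0 < p x := lt_of_le_of_ne (hp x) (Ne.symm hpx)
            rw [klTerm_eq, klTerm_eq, hqx, show p x / (w * ∏ j ∈ I, g j (x j))
                = (p x / w) / (∏ j ∈ I, g j (x j)) by rw [div_div],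
              Real.logb_div (by positivity) (ne_of_gt hqpos),
              Real.logb_prod I _ (fun j hj => ne_of_gt (hgpos j)),
              mul_sub, Finset.mul_sum]
        rw [Finset.sum_congr rfl hdec, Finset.sum_sub_distrib, Finset.sum_comm]
        -- now : ∑ klTerm (p x) w - ∑ j ∈ I, T j ≤ w * ite
        have hSL : ∑ x ∈ F, klTerm (p x) w ≤ T j0 := by
          rw [hT]
          dsimp only
          apply Finset.sum_le_sum
          intro x hx
          by_cases hpx : p x = 0
          · simp [klTerm_eq, hpx]
          · have hxface : ∀ j ∉ I, x j = u j := (Finset.mem_filter.1 hx).2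
            have hppos : 0 < p x := lt_of_le_of_ne (hp x) (Ne.symm hpx)
            rw [klTerm_eq]
            apply mul_le_mul_of_nonneg_left _ (hp x)
            have hle : p x ≤ ∑ y ∈ F.filter (fun y => y j0 = x j0), p y :=
              Finset.single_le_sum (fun y _ => hp y) (Finset.mem_filter.2 ⟨hx, rfl⟩)
            rw [hgj j0 hj0 (x j0)]
            apply (Real.logb_le_logb one_lt_two (div_pos hppos hwpos)
              (div_pos (lt_of_lt_of_le hppos hle) hwpos)).2
            exact (div_le_div_iff_of_pos_right hwpos).2 hle
        have hcard : 1 ≤ I.card := Finset.card_pos.2 ⟨j0, hj0⟩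
        have hIsplit : ∑ j ∈ I, T j = T j0 + ∑ j ∈ I.erase j0, T j :=
          (Finset.add_sum_erase I T hj0).symm
        calc (∑ x ∈ F, klTerm (p x) w) - ∑ j ∈ I, T j
            ≤ T j0 - ∑ j ∈ I, T j := by linarith
          _ = ∑ j ∈ I.erase j0, -T j := by
              rw [hIsplit, Finset.sum_neg_distrib]
              ring
          _ ≤ ∑ _j ∈ I.erase j0, w :=
              Finset.sum_le_sum fun j hj => hTle j (Finset.mem_of_mem_erase hj)
          _ = ((I.card : ℝ) - 1) * w := by
              rw [Finset.sum_const, Finset.card_erase_of_mem hj0, nsmul_eq_mul,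
                Nat.cast_sub hcard, Nat.cast_one]
          _ ≤ w * (if 1 < I.card then (I.card : ℝ) - 1 else 0) := by
              split
              · rw [mul_comm]
              · have h1 : I.card = 1 := by omega
                rw [h1]
                norm_num

lemma bxor_cancel (a b : Bool) : xor (xor a b) b = a := by
  cases a <;> cases b <;> rfl

lemma bxor_swap (a b t : Bool) : (a = xor t b) ↔ (b = xor t a) := by
  cases a <;> cases b <;> cases t <;> simp

variable {n m : ℕ}

def IS (n : ℕ) (nv : Fin m → ℕ) (i : Fin m) : Finset (Fin n) :=
  univ.filter fun j => (j : ℕ) < ee nv ((sg nv).symm i)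

def UV (nv : Fin m → ℕ) (z : Fin n → Bool) (i : Fin m) : Fin n → Bool :=
  fun j => xor ((CC nv ((sg nv).symm i)).testBit j) (z j)

def FB (nv : Fin m → ℕ) (z : Fin n → Bool) (i : Fin m) : Finset (Fin n → Bool) :=
  univ.filter fun x => ∀ j ∉ IS n nv i, x j = UV nv z i j

def XB (nv : Fin m → ℕ) (z : Fin n → Bool) (i : Fin m) : Set (Fin n → Bool) :=
  {x | ∀ j ∉ IS n nv i, x j = UV nv z i j}

lemma FB_eq (nv : Fin m → ℕ) (z : Fin n → Bool) (i : Fin m) :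
    FB nv z i = univ.filter fun x => ∀ j ∉ IS n nv i, x j = UV nv z i j := rfl

lemma XB_eq_coe (nv : Fin m → ℕ) (z : Fin n → Bool) (i : Fin m) :
    XB nv z i = ↑(FB nv z i) := by
  ext x
  simp [XB, FB]

lemma mem_FB_iff (nv : Fin m → ℕ) (hsum : ∑ i, 2 ^ nv i = 2 ^ n)
    (z : Fin n → Bool) (i : Fin m) (x : Fin n → Bool) :
    x ∈ FB nv z i ↔
      (CC nv ((sg nv).symm i) ≤ val (fun j => xor (x j) (z j)) ∧
       val (fun j => xor (x j) (z j)) <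
         CC nv ((sg nv).symm i) + 2 ^ ee nv ((sg nv).symm i)) := by
  rw [← mem_face_iff (CC_dvd nv ((sg nv).symm i)) (CC_add_le nv hsum ((sg nv).symm i))]
  simp only [FB, IS, UV, Finset.mem_filter, Finset.mem_univ, true_and, not_lt]
  constructor
  · intro h j hj
    have h2 := h j (by simpa using hj)
    rw [h2, bxor_cancel]
  · intro h j hj
    have h2 := h j (by simpa using hj)
    rw [← h2, bxor_cancel]

lemma card_IS (nv : Fin m → ℕ) (hsum : ∑ i, 2 ^ nv i = 2 ^ n) (i : Fin m) :
    (IS n nv i).card = nv i := by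
  have h1 : ee nv ((sg nv).symm i) = nv i := by
    rw [ee, Equiv.apply_symm_apply]
  have h2 : nv i ≤ n := by
    have h3 : 2 ^ nv i ≤ 2 ^ n := by
      rw [← hsum]
      exact Finset.single_le_sum (f := fun j => 2 ^ nv j) (fun j _ => Nat.zero_le _) (Finset.mem_univ i)
    exact (Nat.pow_le_pow_iff_right (by norm_num)).1 h3
  rw [IS]
  simp only [h1]
  exact card_filter_lt (nv i) h2

lemma card_FB (nv : Fin m → ℕ) (hsum : ∑ i, 2 ^ nv i = 2 ^ n)
    (z : Fin n → Bool) (i : Fin m) : (FB nv z i).card = 2 ^ nv i := by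
  rw [FB_eq, face_card, card_IS nv hsum]

lemma FB_disjoint (nv : Fin m → ℕ) (hsum : ∑ i, 2 ^ nv i = 2 ^ n)
    (z : Fin n → Bool) {i i' : Fin m} (h : i ≠ i') (x : Fin n → Bool)
    (hx : x ∈ FB nv z i) (hx' : x ∈ FB nv z i') : False := by
  have hK : (sg nv).symm i ≠ (sg nv).symm i' := fun hc => h ((sg nv).symm.injective hc)
  have key : ∀ k k' : Fin m, k < k' → CC nv k + 2 ^ ee nv k ≤ CC nv k' := by
    intro k k' hkk
    have h1 : CC nv ((k : ℕ) + 1) = CC nv k + 2 ^ ee nv k := CC_succ nv k.isLt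
    rw [← h1]
    exact CC_mono nv (by exact hkk)
  rw [mem_FB_iff nv hsum] at hx hx'
  rcases lt_trichotomy ((sg nv).symm i) ((sg nv).symm i') with hlt | heq | hlt
  · have := key _ _ hlt
    omega
  · exact hK heq
  · have := key _ _ hlt
    omega

lemma FB_cover (nv : Fin m → ℕ) (hsum : ∑ i, 2 ^ nv i = 2 ^ n)
    (z : Fin n → Bool) (x : Fin n → Bool) : ∃ i, x ∈ FB nv z i := by
  obtain ⟨k, h1, h2⟩ := CC_cover nv hsum (val_lt (fun j => xor (x j) (z j)))
  refine ⟨sg nv k, ?_⟩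
  rw [mem_FB_iff nv hsum, Equiv.symm_apply_apply]
  exact ⟨h1, h2⟩

lemma zcard (nv : Fin m → ℕ) (hsum : ∑ i, 2 ^ nv i = 2 ^ n)
    (i : Fin m) (x : Fin n → Bool) :
    (univ.filter fun z : Fin n → Bool => x ∈ FB nv z i).card = 2 ^ nv i := by
  have h1 : (univ.filter fun z : Fin n → Bool => x ∈ FB nv z i)
      = univ.filter fun z : Fin n → Bool =>
          ∀ j ∉ IS n nv i, z j = xor ((CC nv ((sg nv).symm i)).testBit j) (x j) := by
    apply Finset.filter_congr
    intro z _
    rw [FB, Finset.mem_filter]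
    simp only [Finset.mem_univ, true_and, UV]
    exact forall_congr' fun j => imp_congr Iff.rfl (bxor_swap _ _ _)
  rw [h1, face_card, card_IS nv hsum]


end KLAux

/-- (Lemma 3 of the paper.) Let `n₁,…,n_m ≥ 0` with `2^{n₁}+…+2^{n_m} = 2^n`.
For every probability distribution `p` on `{0,1}^n` there are a partition of `{0,1}^n` into
cubical blocks `X i` with `|X i| = 2^{nᵢ}` and a mixture `q = ∑ αᵢ qᵢ` of product
distributions `qᵢ` supported on the respective blocks such that
`D(p‖q) ≤ ∑_{i : nᵢ > 1} (nᵢ - 1)/2^{n - nᵢ}`. -/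
theorem kl_bound_mixture_cubical_blocks (n m : ℕ) (nv : Fin m → ℕ)
    (hsum : ∑ i, 2 ^ nv i = 2 ^ n)
    (p : (Fin n → Bool) → ℝ) (hp : IsProb p) :
    ∃ X : Fin m → Set (Fin n → Bool),
      (∀ i, IsFace (X i)) ∧ (∀ i, (X i).ncard = 2 ^ nv i) ∧
      (∀ i j, i ≠ j → Disjoint (X i) (X j)) ∧ (∀ v, ∃ i, v ∈ X i) ∧
      ∃ (α : Fin m → ℝ) (q : Fin m → (Fin n → Bool) → ℝ),
        (∀ i, 0 ≤ α i) ∧ (∑ i, α i = 1) ∧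
        (∀ i, IsProb (q i) ∧ IsProductDist (q i) ∧ ∀ x ∉ X i, q i x = 0) ∧
        KL p (fun v => ∑ i, α i * q i v) ≤
          ((∑ i ∈ Finset.univ.filter (fun i => 1 < nv i),
              ((nv i : ℝ) - 1) / 2 ^ (n - nv i) : ℝ) : EReal) := by
  classical
  obtain ⟨hp0, hp1⟩ := hp
  set RHS : ℝ := ∑ i ∈ Finset.univ.filter (fun i => 1 < nv i),
      ((nv i : ℝ) - 1) / 2 ^ (n - nv i) with hRHS
  set d : Fin m → ℝ := fun i => if 1 < nv i then (nv i : ℝ) - 1 else 0 with hd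
  have hnvn : ∀ i, nv i ≤ n := by
    intro i
    have h3 : 2 ^ nv i ≤ 2 ^ n := by
      rw [← hsum]
      exact Finset.single_le_sum (f := fun j => 2 ^ nv j) (fun j _ => Nat.zero_le _)
        (Finset.mem_univ i)
    exact (Nat.pow_le_pow_iff_right (by norm_num)).1 h3
  have hpart : ∀ z : Fin n → Bool, ∀ f : (Fin n → Bool) → ℝ,
      ∑ x, f x = ∑ i, ∑ x ∈ KLAux.FB nv z i, f x := by
    intro z f
    calc ∑ x, f x
        = ∑ x : Fin n → Bool, ∑ i : Fin m, if x ∈ KLAux.FB nv z i then f x else 0 := by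
          apply Finset.sum_congr rfl
          intro x _
          obtain ⟨i0, hi0⟩ := KLAux.FB_cover nv hsum z x
          rw [Finset.sum_eq_single i0]
          · rw [if_pos hi0]
          · intro i _ hne
            exact if_neg (fun hxi => KLAux.FB_disjoint nv hsum z hne x hxi hi0)
          · intro h
            exact absurd (Finset.mem_univ i0) h
      _ = ∑ i : Fin m, ∑ x : Fin n → Bool, if x ∈ KLAux.FB nv z i then f x else 0 :=
          Finset.sum_comm
      _ = ∑ i, ∑ x ∈ KLAux.FB nv z i, f x := by
          apply Finset.sum_congr rfl
          intro i _
          rw [Finset.sum_ite_mem, Finset.univ_inter]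
  have hzsum : ∀ i : Fin m, ∑ z : Fin n → Bool, ∑ x ∈ KLAux.FB nv z i, p x
      = (2 ^ nv i : ℝ) := by
    intro i
    calc ∑ z : Fin n → Bool, ∑ x ∈ KLAux.FB nv z i, p x
        = ∑ z : Fin n → Bool, ∑ x : Fin n → Bool, if x ∈ KLAux.FB nv z i then p x else 0 := by
          apply Finset.sum_congr rfl
          intro z _
          rw [Finset.sum_ite_mem, Finset.univ_inter]
      _ = ∑ x : Fin n → Bool, ∑ z : Fin n → Bool, if x ∈ KLAux.FB nv z i then p x else 0 :=
          Finset.sum_comm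
      _ = ∑ x : Fin n → Bool, (2 ^ nv i : ℝ) * p x := by
          apply Finset.sum_congr rfl
          intro x _
          rw [← Finset.sum_filter, Finset.sum_const, KLAux.zcard nv hsum i x, nsmul_eq_mul]
          push_cast
          ring
      _ = (2 ^ nv i : ℝ) := by
          rw [← Finset.mul_sum, hp1, mul_one]
  have hkey : ∑ i, (2 ^ nv i : ℝ) * d i = 2 ^ n * RHS := by
    rw [hRHS, Finset.mul_sum, Finset.sum_filter]
    apply Finset.sum_congr rfl
    intro i _
    rw [hd]
    dsimp only
    by_cases h : 1 < nv i
    · rw [if_pos h, if_pos h]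
      have hpow : (2 : ℝ) ^ nv i * 2 ^ (n - nv i) = 2 ^ n := by
        rw [← pow_add]
        congr 1
        have := hnvn i
        omega
      have h2 : (0 : ℝ) < 2 ^ (n - nv i) := by positivity
      field_simp
      linear_combination ((nv i : ℝ) - 1) * hpow
    · rw [if_neg h, if_neg h, mul_zero]
  have havg : ∑ z : Fin n → Bool, (∑ i, (∑ x ∈ KLAux.FB nv z i, p x) * d i)
      ≤ ∑ _z : Fin n → Bool, RHS := by
    rw [Finset.sum_comm]
    have h1 : ∀ i : Fin m, ∑ z : Fin n → Bool, (∑ x ∈ KLAux.FB nv z i, p x) * d i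
        = (2 ^ nv i : ℝ) * d i := by
      intro i
      rw [← Finset.sum_mul, hzsum i]
    rw [Finset.sum_congr rfl fun i _ => h1 i, hkey, Finset.sum_const, nsmul_eq_mul,
      Finset.card_univ]
    have hcard : ((Fintype.card (Fin n → Bool) : ℝ)) = 2 ^ n := by
      simp [Fintype.card_fun]
    rw [hcard]
  obtain ⟨z, _, hz⟩ := Finset.exists_le_of_sum_le Finset.univ_nonempty havg
  choose q hq1 hq2 hq3 hq4 hq5 using
    fun i => KLAux.block_bound p hp0 (KLAux.IS n nv i) (KLAux.UV nv z i)
  have hXF : ∀ i x, x ∈ KLAux.XB nv z i ↔ x ∈ KLAux.FB nv z i := by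
    intro i x
    rw [KLAux.XB_eq_coe]
    exact Finset.mem_coe
  refine ⟨KLAux.XB nv z, fun i => ⟨KLAux.IS n nv i, KLAux.UV nv z i, rfl⟩, ?_, ?_, ?_,
    (fun i => ∑ x ∈ KLAux.FB nv z i, p x), q, ?_, ?_, ?_, ?_⟩
  · intro i
    rw [KLAux.XB_eq_coe, Set.ncard_coe_finset, KLAux.card_FB nv hsum]
  · intro i j hij
    rw [Set.disjoint_left]
    intro x hxi hxj
    exact KLAux.FB_disjoint nv hsum z hij x ((hXF i x).1 hxi) ((hXF j x).1 hxj)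
  · intro v
    obtain ⟨i, hi⟩ := KLAux.FB_cover nv hsum z v
    exact ⟨i, (hXF i v).2 hi⟩
  · intro i
    exact Finset.sum_nonneg fun x _ => hp0 x
  · rw [← hpart z p]
    exact hp1
  · intro i
    refine ⟨hq1 i, hq2 i, fun x hx => hq3 i x ?_⟩
    intro hc
    exact hx hc
  · have hsupp : ∀ x, p x ≠ 0 → (∑ i, (∑ y ∈ KLAux.FB nv z i, p y) * q i x) ≠ 0 := by
      intro x hpx
      obtain ⟨i0, hi0⟩ := KLAux.FB_cover nv hsum z x
      have h1 : 0 < p x := lt_of_le_of_ne (hp0 x) (Ne.symm hpx)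
      have h2 : p x ≤ ∑ y ∈ KLAux.FB nv z i0, p y :=
        Finset.single_le_sum (fun y _ => hp0 y) hi0
      have h3 : 0 < q i0 x := hq4 i0 x (Finset.mem_filter.1 hi0).2 hpx
      have hterm : 0 < (∑ y ∈ KLAux.FB nv z i0, p y) * q i0 x :=
        mul_pos (lt_of_lt_of_le h1 h2) h3
      have hnn : ∀ i ∈ Finset.univ, 0 ≤ (∑ y ∈ KLAux.FB nv z i, p y) * q i x :=
        fun i _ => mul_nonneg (Finset.sum_nonneg fun y _ => hp0 y) ((hq1 i).1 x)
      exact ne_of_gt (Finset.sum_pos' hnn ⟨i0, Finset.mem_univ i0, hterm⟩)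
    rw [KL, if_pos hsupp]
    rw [EReal.coe_le_coe_iff]
    beta_reduce
    calc ∑ x, klTerm (p x) (∑ i, (∑ y ∈ KLAux.FB nv z i, p y) * q i x)
        = ∑ i, ∑ x ∈ KLAux.FB nv z i,
            klTerm (p x) (∑ k, (∑ y ∈ KLAux.FB nv z k, p y) * q k x) :=
          hpart z _
      _ = ∑ i, ∑ x ∈ KLAux.FB nv z i,
            klTerm (p x) ((∑ y ∈ KLAux.FB nv z i, p y) * q i x) := by
          apply Finset.sum_congr rfl
          intro i _
          apply Finset.sum_congr rfl
          intro x hx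
          congr 1
          apply Finset.sum_eq_single i
          · intro k _ hki
            have hxk : ¬(∀ j ∉ KLAux.IS n nv k, x j = KLAux.UV nv z k j) := by
              intro hc
              exact KLAux.FB_disjoint nv hsum z hki x
                (Finset.mem_filter.2 ⟨Finset.mem_univ x, hc⟩) hx
            rw [hq3 k x hxk, mul_zero]
          · intro hni
            exact absurd (Finset.mem_univ i) hni
      _ ≤ ∑ i, (∑ y ∈ KLAux.FB nv z i, p y) * d i := by
          apply Finset.sum_le_sum
          intro i _
          have h := hq5 i
          rw [← KLAux.FB_eq nv z i, KLAux.card_IS nv hsum i] at h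
          rw [hd]
          exact h
      _ ≤ RHS := hz
end
end

section
/- For every real x > 0 and every real n: (n-1) - log₂(x) ≤ n - ⌊log₂(x)⌋ - x/2^{⌊log₂(x)⌋} ≤ (n-1) - log₂(x) + c, where c = -log₂(ln 2) - (1/ln 2 - 1) ≈ 0.086. -/
open scoped BigOperators

noncomputable section

/-- (Lemma 4 / Appendix lemma of the paper.) For all real `x > 0` and all
real `n`:
`(n-1) - log₂ x ≤ n - ⌊log₂ x⌋ - x/2^⌊log₂ x⌋ ≤ (n-1) - log₂ x + c`, where
`c = -log₂(ln 2) - (1/ln 2 - 1) ≈ 0.086`. -/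
theorem floor_log_interpolation_bounds (x : ℝ) (hx : 0 < x) (n : ℝ) :
    (n - 1) - Real.logb 2 x ≤
      n - (⌊Real.logb 2 x⌋ : ℝ) - x / (2 : ℝ) ^ ⌊Real.logb 2 x⌋ ∧
    n - (⌊Real.logb 2 x⌋ : ℝ) - x / (2 : ℝ) ^ ⌊Real.logb 2 x⌋ ≤
      (n - 1) - Real.logb 2 x +
        (-Real.logb 2 (Real.log 2) - (1 / Real.log 2 - 1)) := by

  set t := Real.logb 2 x with ht
  set k := ⌊t⌋ with hk
  set s := t - (k : ℝ) with hs
  have hs0 : 0 ≤ s := by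
    have := Int.floor_le t
    simp [hs]; linarith
  have hs1 : s < 1 := by
    have := Int.lt_floor_add_one t
    simp [hs]; linarith
  have hlog2 : (0:ℝ) < Real.log 2 := Real.log_pos (by norm_num)
  have hxeq : x / (2 : ℝ) ^ k = Real.exp (s * Real.log 2) := by
    have hx2 : x = (2:ℝ) ^ t := (Real.rpow_logb (by norm_num) (by norm_num) hx).symm
    have hzk : ((2:ℝ) ^ k : ℝ) = (2:ℝ) ^ ((k:ℝ)) := (Real.rpow_intCast 2 k).symm
    rw [hx2, hzk, ← Real.rpow_sub (by norm_num), ← hs, Real.rpow_def_of_pos (by norm_num)]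
    ring_nf
  rw [hxeq]
  constructor
  · -- exp(s log 2) ≤ 1 + s by convexity
    have hconv := convexOn_exp.2 (Set.mem_univ (0:ℝ)) (Set.mem_univ (Real.log 2))
      (by linarith : (0:ℝ) ≤ 1 - s) hs0 (by ring)
    simp only [smul_eq_mul, mul_zero, zero_add, Real.exp_zero, Real.exp_log (by norm_num : (0:ℝ) < 2)] at hconv
    have : Real.exp (s * Real.log 2) ≤ 1 + s := by linarith
    linarith
  · -- s + 1 - exp(s log 2) ≤ c
    have key := Real.add_one_le_exp (s * Real.log 2 + Real.log (Real.log 2))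
    rw [Real.exp_add, Real.exp_log hlog2] at key
    -- key : s*log2 + log(log 2) + 1 ≤ exp(s log2) * log 2
    have hlb : Real.logb 2 (Real.log 2) = Real.log (Real.log 2) / Real.log 2 := rfl
    have h2 : s + Real.log (Real.log 2) / Real.log 2 + 1 / Real.log 2 ≤
        Real.exp (s * Real.log 2) := by
      rw [show s + Real.log (Real.log 2) / Real.log 2 + 1 / Real.log 2 =
        (s * Real.log 2 + Real.log (Real.log 2) + 1) / Real.log 2 by
          field_simp]
      rw [div_le_iff₀ hlog2]
      exact key
    rw [hlb]
    have hkts : (k:ℝ) = t - s := by rw [hs]; ring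
    rw [hkts]
    linarith
end
end

section
/- Let p = p_{W,C,B} be the visible distribution of an RBM with n visible and m-1 hidden units, and let F be a face of the n-cube such that the restriction of p to F is proportional to a product distribution on F. Then for every product distribution p̂ supported on F and every α ∈ [0,1], the mixture (1-α)·p + α·p̂ belongs to RBM_{n,m}. That is, appending one hidden unit allows to mix the current visible distribution with an arbitrary product distribution supported on any face on which the current distribution restricts to a product distribution. -/
open scoped BigOperators

noncomputable section

open Filter Topology

lemma rbm_cons (n m : ℕ) (W : Matrix (Fin m) (Fin n) ℝ) (C : Fin m → ℝ) (B : Fin n → ℝ)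
    (w : Fin n → ℝ) (c : ℝ) (v : Fin n → Bool) :
    rbmDist n (m+1) (Fin.cons w W) (Fin.cons c C) B v =
      ((1 + Real.exp (c + ∑ i, w i * bval (v i))) *
        (∑ h : Fin m → Bool, Real.exp ((∑ j, ∑ i, bval (h j) * W j i * bval (v i)) +
          (∑ j, C j * bval (h j)) + (∑ i, B i * bval (v i))))) /
      (∑ v' : Fin n → Bool, (1 + Real.exp (c + ∑ i, w i * bval (v' i))) *
        (∑ h : Fin m → Bool, Real.exp ((∑ j, ∑ i, bval (h j) * W j i * bval (v' i)) +
          (∑ j, C j * bval (h j)) + (∑ i, B i * bval (v' i))))) := by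
  have key : ∀ v : Fin n → Bool,
      (∑ h : Fin (m+1) → Bool,
        Real.exp ((∑ j, ∑ i, bval (h j) * (Fin.cons w W : Matrix (Fin (m+1)) (Fin n) ℝ) j i * bval (v i)) +
          (∑ j, (Fin.cons c C : Fin (m+1) → ℝ) j * bval (h j)) + (∑ i, B i * bval (v i))))
      = (1 + Real.exp (c + ∑ i, w i * bval (v i))) *
        ∑ h : Fin m → Bool, Real.exp ((∑ j, ∑ i, bval (h j) * W j i * bval (v i)) +
          (∑ j, C j * bval (h j)) + (∑ i, B i * bval (v i))) := by
    intro v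
    rw [← Equiv.sum_comp (Fin.consEquiv (fun _ : Fin (m+1) => Bool)), Fintype.sum_prod_type]
    have step : ∀ (b : Bool) (h : Fin m → Bool),
        Real.exp ((∑ j : Fin (m+1), ∑ i, bval (Fin.cons (α := fun _ => Bool) b h j) * (Fin.cons w W : Matrix (Fin (m+1)) (Fin n) ℝ) j i * bval (v i)) +
          (∑ j : Fin (m+1), (Fin.cons c C : Fin (m+1) → ℝ) j * bval (Fin.cons (α := fun _ => Bool) b h j)) + (∑ i, B i * bval (v i)))
        = Real.exp (bval b * (c + ∑ i, w i * bval (v i))) *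
          Real.exp ((∑ j, ∑ i, bval (h j) * W j i * bval (v i)) +
            (∑ j, C j * bval (h j)) + (∑ i, B i * bval (v i))) := by
      intro b h
      rw [← Real.exp_add]
      congr 1
      simp only [Fin.sum_univ_succ, Fin.cons_zero, Fin.cons_succ, mul_assoc, mul_add,
        Finset.mul_sum]
      have e0 : ∀ x, (Fin.cons w W : Matrix (Fin (m+1)) (Fin n) ℝ) 0 x = w x := fun x => rfl
      have es : ∀ (j : Fin m) x, (Fin.cons w W : Matrix (Fin (m+1)) (Fin n) ℝ) j.succ x = W j x :=
        fun _ _ => rfl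
      simp only [e0, es]
      ring
    simp only [Fin.consEquiv_apply, step]
    rw [Fintype.sum_bool]
    simp only [bval, Bool.false_eq_true, ite_true, ite_false, one_mul, zero_mul,
      Real.exp_zero]
    rw [← Finset.mul_sum]
    ring
  unfold rbmDist
  rw [key v]
  congr 1
  exact Finset.sum_congr rfl fun v' _ => key v'

lemma rbmDist_pos (n m : ℕ) (W : Matrix (Fin m) (Fin n) ℝ) (C : Fin m → ℝ) (B : Fin n → ℝ)
    (v : Fin n → Bool) : 0 < rbmDist n m W C B v := by
  unfold rbmDist
  apply div_pos
  · exact Finset.sum_pos (fun h _ => Real.exp_pos _) Finset.univ_nonempty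
  · exact Finset.sum_pos
      (fun v' _ => Finset.sum_pos (fun h _ => Real.exp_pos _) Finset.univ_nonempty)
      Finset.univ_nonempty

lemma main_case (n m : ℕ)
    (W : Matrix (Fin m) (Fin n) ℝ) (C : Fin m → ℝ) (B : Fin n → ℝ)
    (p : (Fin n → Bool) → ℝ) (hpdef : p = rbmDist n m W C B)
    (I : Finset (Fin n)) (u : Fin n → Bool)
    (F : Set (Fin n → Bool)) (hFdef : F = {x | ∀ i ∉ I, x i = u i})
    (K : ℝ) (η : Fin n → ℝ) (hη : ∀ i ∉ I, η i = 0)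
    (hrestr : ∀ v ∈ F, p v = K * Real.exp (∑ i, η i * bval (v i)))
    (phat : (Fin n → Bool) → ℝ)
    (hphat : IsProb phat ∧ IsProductDist phat ∧ ∀ x ∉ F, phat x = 0)
    (α : ℝ) (hα0 : 0 < α) (hα1 : α < 1) :
    (fun v => (1 - α) * p v + α * phat v) ∈ RBM n (m + 1) := by
  obtain ⟨hprob, ⟨f, hf, hfeq⟩, hsupp⟩ := hphat
  have hp_pos : ∀ v, 0 < p v := fun v => hpdef ▸ rbmDist_pos n m W C B v
  have huF : u ∈ F := by rw [hFdef]; intro i _; rfl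
  have hK : 0 < K := by
    have h1 := hrestr u huF
    have h2 := hp_pos u
    nlinarith [Real.exp_pos (∑ i, η i * bval (u i))]
  -- existence of a positive point of phat in F
  obtain ⟨v0, hv0F, hv0pos⟩ : ∃ v0 ∈ F, 0 < phat v0 := by
    by_contra hcon; push_neg at hcon
    have hall : ∀ v, phat v = 0 := fun v => by
      by_cases hv : v ∈ F
      · exact le_antisymm (hcon v hv) (hprob.1 v)
      · exact hsupp v hv
    have := hprob.2
    simp [hall] at this
  have hfv0 : ∀ i, 0 < f i (v0 i) := by
    intro i
    have h0 : (∏ j, f j (v0 j)) ≠ 0 := by rw [← hfeq]; exact hv0pos.ne'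
    have h1 := Finset.prod_ne_zero_iff.mp h0 i (Finset.mem_univ i)
    exact lt_of_le_of_ne ((hf i).1 _) (Ne.symm h1)
  have hfle1 : ∀ i b, f i b ≤ 1 := by
    intro i b
    have hs : f i true + f i false = 1 := by
      have := (hf i).2; rwa [Fintype.sum_bool] at this
    cases b
    · have := (hf i).1 true; linarith
    · have := (hf i).1 false; linarith
  have hfu1 : ∀ i ∉ I, f i (u i) = 1 := by
    intro i hi
    have hs : f i true + f i false = 1 := by
      have := (hf i).2; rwa [Fintype.sum_bool] at this
    have hx : Function.update v0 i (!u i) ∉ F := by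
      rw [hFdef]
      intro hmem
      have h2 := hmem i hi
      rw [Function.update_self] at h2
      exact (Bool.not_ne_self (u i)) h2
    have h0 : phat (Function.update v0 i (!u i)) = 0 := hsupp _ hx
    rw [hfeq] at h0
    have hfz : f i (!(u i)) = 0 := by
      by_contra hne
      refine (Finset.prod_ne_zero_iff.mpr (fun j _ => ?_)) h0
      by_cases hj : j = i
      · subst hj; rwa [Function.update_self]
      · rw [Function.update_of_ne hj]; exact (hfv0 j).ne'
    cases hu : u i <;> simp only [hu] at hfz ⊢ <;> simp at hfz <;> linarith
  -- main construction
  set l : ℝ := α / (1 - α) with hl_def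
  have hl : 0 < l := div_pos hα0 (by linarith)
  set E : (Fin n → Bool) → ℝ := fun v => ∑ h : Fin m → Bool,
      Real.exp ((∑ j, ∑ i, bval (h j) * W j i * bval (v i)) +
        (∑ j, C j * bval (h j)) + (∑ i, B i * bval (v i))) with hE_def
  set Z : ℝ := ∑ v, E v with hZ_def
  have hE_pos : ∀ v, 0 < E v :=
    fun v => Finset.sum_pos (fun h _ => Real.exp_pos _) Finset.univ_nonempty
  have hZ_pos : 0 < Z := Finset.sum_pos (fun v _ => hE_pos v) Finset.univ_nonempty
  have hpv : ∀ v, p v = E v / Z := fun v => by rw [hpdef]; rfl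
  have hEv : ∀ v, E v = Z * p v := fun v => by rw [hpv v]; field_simp
  set c0 : ℝ := Real.log (l / K) with hc0
  set d : Fin n → Bool → ℝ := fun i b => if i ∈ I then 0 else (if b = u i then 0 else -1) with hd
  set L : ℕ → Fin n → Bool → ℝ := fun t i b =>
    if i ∈ I then (if f i b = 0 then -(t:ℝ) else Real.log (f i b)) else 0 with hL
  set A : ℕ → Fin n → Bool → ℝ :=
    fun t i b => L t i b + (t:ℝ) * d i b - η i * bval b with hA
  set wseq : ℕ → Fin n → ℝ := fun t i => A t i true - A t i false with hw
  set cseq : ℕ → ℝ := fun t => c0 + ∑ i, A t i false with hc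
  have hg : ∀ (t : ℕ) (v : Fin n → Bool),
      cseq t + ∑ i, wseq t i * bval (v i) = c0 + ∑ i, A t i (v i) := by
    intro t v
    rw [hc]
    rw [add_assoc, ← Finset.sum_add_distrib]
    congr 1
    refine Finset.sum_congr rfl fun i _ => ?_
    rw [hw]
    cases hvi : v i <;> simp [bval] <;> ring
  -- the key pointwise limit
  have keylim : ∀ v, Tendsto (fun t : ℕ => p v * Real.exp (c0 + ∑ i, A t i (v i)))
      atTop (𝓝 (l * phat v)) := by
    intro v
    have hexp0 : Tendsto (fun t : ℕ => Real.exp (-(t:ℝ))) atTop (𝓝 0) :=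
      Real.tendsto_exp_atBot.comp
        (tendsto_neg_atBot_iff.mpr tendsto_natCast_atTop_atTop)
    by_cases hvF : v ∈ F
    · have hveq : ∀ i ∉ I, v i = u i := by rw [hFdef] at hvF; exact hvF
      have hper : ∀ i : Fin n, Tendsto (fun t : ℕ => Real.exp (A t i (v i))) atTop
          (𝓝 (f i (v i) * Real.exp (-(η i * bval (v i))))) := by
        intro i
        by_cases hi : i ∈ I
        · by_cases hf0 : f i (v i) = 0
          · have heq : ∀ t : ℕ, Real.exp (A t i (v i))
                = Real.exp (-(η i * bval (v i))) * Real.exp (-(t:ℝ)) := by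
              intro t
              rw [← Real.exp_add]
              congr 1
              simp [hA, hL, hd, hi, hf0]
              ring
            have h3 := hexp0.const_mul (Real.exp (-(η i * bval (v i))))
            rw [mul_zero] at h3
            have hfun : (fun t : ℕ => Real.exp (A t i (v i)))
                = fun t : ℕ => Real.exp (-(η i * bval (v i))) * Real.exp (-(t:ℝ)) := funext heq
            rw [hfun, hf0, zero_mul]
            exact h3
          · have heq : ∀ t : ℕ, Real.exp (A t i (v i))
                = f i (v i) * Real.exp (-(η i * bval (v i))) := by
              intro t
              have lval : A t i (v i) = Real.log (f i (v i)) + -(η i * bval (v i)) := by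
                simp [hA, hL, hd, hi, hf0]
                ring
              rw [lval, Real.exp_add,
                Real.exp_log (lt_of_le_of_ne ((hf i).1 _) (Ne.symm hf0))]
            simp only [heq]
            exact tendsto_const_nhds
        · have hηi := hη i hi
          have htarget : f i (v i) * Real.exp (-(η i * bval (v i))) = 1 := by
            rw [hveq i hi, hfu1 i hi, hηi]; simp
          have heq : ∀ t : ℕ, Real.exp (A t i (v i)) = 1 := by
            intro t
            have lval : A t i (v i) = 0 := by
              simp [hA, hL, hd, hi, hηi, hveq i hi]
            rw [lval, Real.exp_zero]
          rw [htarget]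
          simp only [heq]
          exact tendsto_const_nhds
      have hprod := tendsto_finset_prod (f := fun i (t : ℕ) => Real.exp (A t i (v i)))
        (Finset.univ) (fun i _ => hper i)
      have hval : p v * Real.exp c0 * ∏ i, (f i (v i) * Real.exp (-(η i * bval (v i))))
          = l * phat v := by
        rw [Finset.prod_mul_distrib, ← Real.exp_sum, hrestr v hvF, hc0,
          Real.exp_log (div_pos hl hK), ← hfeq]
        have hneg : (∑ i, -(η i * bval (v i))) = -∑ i, η i * bval (v i) := by
          rw [← Finset.sum_neg_distrib]
        rw [hneg, Real.exp_neg]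
        have hexpne : Real.exp (∑ i, η i * bval (v i)) ≠ 0 := Real.exp_ne_zero _
        field_simp
      have hfull : Tendsto (fun t : ℕ => p v * Real.exp (c0 + ∑ i, A t i (v i))) atTop
          (𝓝 (p v * Real.exp c0 * ∏ i, (f i (v i) * Real.exp (-(η i * bval (v i)))))) := by
        have hform : ∀ t : ℕ, p v * Real.exp (c0 + ∑ i, A t i (v i))
            = p v * Real.exp c0 * ∏ i, Real.exp (A t i (v i)) := by
          intro t; rw [Real.exp_add, Real.exp_sum]; ring
        simp only [hform]
        exact hprod.const_mul _
      rw [← hval]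
      exact hfull
    · have hphat0 : phat v = 0 := hsupp v hvF
      rw [hphat0, mul_zero]
      obtain ⟨i0, hi0I, hi0ne⟩ : ∃ i0, i0 ∉ I ∧ v i0 ≠ u i0 := by
        by_contra hcon; push_neg at hcon
        exact hvF (by rw [hFdef]; intro i hi; exact hcon i hi)
      have hdle : ∀ i, d i (v i) ≤ 0 := by
        intro i
        rw [hd]; dsimp only
        split
        · exact le_refl 0
        · split
          · exact le_refl 0
          · norm_num
      have hdone : d i0 (v i0) = -1 := by
        rw [hd]; dsimp only
        rw [if_neg hi0I, if_neg hi0ne]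
      have hdsum : (∑ i, d i (v i)) ≤ -1 := by
        have hstep : (∑ i, d i (v i)) ≤ ∑ i, (if i = i0 then (-1:ℝ) else 0) := by
          refine Finset.sum_le_sum fun i _ => ?_
          by_cases hii : i = i0
          · subst hii; rw [hdone]; simp
          · rw [if_neg hii]; exact hdle i
        simpa using hstep
      have hAle : ∀ (t : ℕ) (i : Fin n), A t i (v i) ≤ |η i| + (t:ℝ) * d i (v i) := by
        intro t i
        have h1 : L t i (v i) ≤ 0 := by
          rw [hL]; dsimp only
          split
          · split
            · simp
            · exact Real.log_nonpos ((hf i).1 _) (hfle1 i _)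
          · exact le_refl 0
        have h2 : -(η i * bval (v i)) ≤ |η i| := by
          cases v i
          · simpa [bval] using abs_nonneg (η i)
          · simpa [bval] using neg_le_abs (η i)
        rw [hA]; dsimp only
        linarith
      have hgle : ∀ t : ℕ, c0 + ∑ i, A t i (v i) ≤ (c0 + ∑ i, |η i|) + -(t:ℝ) := by
        intro t
        have h1 : (∑ i, A t i (v i)) ≤ ∑ i, (|η i| + (t:ℝ) * d i (v i)) :=
          Finset.sum_le_sum fun i _ => hAle t i
        have h2 : (∑ i, (|η i| + (t:ℝ) * d i (v i)))
            = (∑ i, |η i|) + (t:ℝ) * ∑ i, d i (v i) := by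
          rw [Finset.sum_add_distrib, Finset.mul_sum]
        have h3 : (t:ℝ) * (∑ i, d i (v i)) ≤ (t:ℝ) * (-1) :=
          mul_le_mul_of_nonneg_left hdsum (Nat.cast_nonneg t)
        linarith
      have hub : ∀ t : ℕ, p v * Real.exp (c0 + ∑ i, A t i (v i))
          ≤ (p v * Real.exp (c0 + ∑ i, |η i|)) * Real.exp (-(t:ℝ)) := by
        intro t
        calc p v * Real.exp (c0 + ∑ i, A t i (v i))
            ≤ p v * Real.exp ((c0 + ∑ i, |η i|) + -(t:ℝ)) :=
              mul_le_mul_of_nonneg_left (Real.exp_le_exp.mpr (hgle t)) (hp_pos v).le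
          _ = (p v * Real.exp (c0 + ∑ i, |η i|)) * Real.exp (-(t:ℝ)) := by
              rw [Real.exp_add]; ring
      have hlim0 : Tendsto
          (fun t : ℕ => (p v * Real.exp (c0 + ∑ i, |η i|)) * Real.exp (-(t:ℝ)))
          atTop (𝓝 0) := by
        have := hexp0.const_mul (p v * Real.exp (c0 + ∑ i, |η i|))
        rwa [mul_zero] at this
      exact squeeze_zero (fun t => mul_nonneg (hp_pos v).le (Real.exp_pos _).le) hub hlim0
  -- assembly
  have hEraw : ∀ v : Fin n → Bool, (∑ h : Fin m → Bool,
      Real.exp ((∑ j, ∑ i, bval (h j) * W j i * bval (v i)) +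
        (∑ j, C j * bval (h j)) + (∑ i, B i * bval (v i)))) = E v := fun v => rfl
  have hmem : ∀ t : ℕ, (rbmDist n (m+1) (Fin.cons (wseq t) W) (Fin.cons (cseq t) C) B) ∈
      { q : (Fin n → Bool) → ℝ | ∃ (W' : Matrix (Fin (m+1)) (Fin n) ℝ)
        (C' : Fin (m+1) → ℝ) (B' : Fin n → ℝ), q = rbmDist n (m+1) W' C' B' } :=
    fun t => ⟨_, _, _, rfl⟩
  have htend : Tendsto
      (fun t : ℕ => rbmDist n (m+1) (Fin.cons (wseq t) W) (Fin.cons (cseq t) C) B)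
      atTop (𝓝 (fun v => (1 - α) * p v + α * phat v)) := by
    rw [tendsto_pi_nhds]
    intro v
    have hq : ∀ t : ℕ, rbmDist n (m+1) (Fin.cons (wseq t) W) (Fin.cons (cseq t) C) B v
        = (E v + Z * (p v * Real.exp (c0 + ∑ i, A t i (v i)))) /
          (∑ v', (E v' + Z * (p v' * Real.exp (c0 + ∑ i, A t i (v' i))))) := by
      intro t
      rw [rbm_cons]
      simp only [hEraw, hg]
      congr 1
      · rw [hEv v]; ring
      · refine Finset.sum_congr rfl fun v' _ => ?_
        rw [hEv v']; ring
    have hnum : Tendsto (fun t : ℕ => E v + Z * (p v * Real.exp (c0 + ∑ i, A t i (v i))))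
        atTop (𝓝 (E v + Z * (l * phat v))) :=
      tendsto_const_nhds.add ((keylim v).const_mul Z)
    have hden : Tendsto
        (fun t : ℕ => ∑ v', (E v' + Z * (p v' * Real.exp (c0 + ∑ i, A t i (v' i)))))
        atTop (𝓝 (∑ v', (E v' + Z * (l * phat v')))) :=
      tendsto_finset_sum _ (fun v' _ => tendsto_const_nhds.add ((keylim v').const_mul Z))
    have hdenval : (∑ v', (E v' + Z * (l * phat v'))) = Z * (1 + l) := by
      rw [Finset.sum_add_distrib, ← hZ_def, ← Finset.mul_sum, ← Finset.mul_sum, hprob.2]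
      ring
    have hZl_ne : Z * (1 + l) ≠ 0 := ne_of_gt (mul_pos hZ_pos (by linarith))
    have hne : (∑ v', (E v' + Z * (l * phat v'))) ≠ 0 := by rw [hdenval]; exact hZl_ne
    have hlimval : (E v + Z * (l * phat v)) / (Z * (1 + l))
        = (1 - α) * p v + α * phat v := by
      rw [hEv v, hl_def]
      have h1 : (1:ℝ) - α ≠ 0 := by linarith
      field_simp
      ring
    simp only [hq]
    rw [← hlimval, ← hdenval]
    exact hnum.div hden hne
  unfold RBM
  exact mem_closure_of_tendsto htend (Filter.Eventually.of_forall hmem)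

/-- Let `p = p_{W,C,B}` be the visible distribution of an RBM with `n`
visible and `m` hidden units, and let `F` be a face of the `n`-cube (with free coordinates
`I`) on which `p` restricts proportionally to a product distribution, i.e.
`p v = K·exp(η·v)` on `F` with `ηᵢ = 0` for `i ∉ I`. Then for every product distribution
`p̂` supported on `F` and every `α ∈ [0,1]`, the mixture `(1-α)·p + α·p̂` belongs to the RBM
model with one additional hidden unit. -/
theorem append_hidden_unit_mixture (n m : ℕ)
    (W : Matrix (Fin m) (Fin n) ℝ) (C : Fin m → ℝ) (B : Fin n → ℝ)
    (p : (Fin n → Bool) → ℝ) (hpdef : p = rbmDist n m W C B)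
    (I : Finset (Fin n)) (u : Fin n → Bool)
    (F : Set (Fin n → Bool)) (hFdef : F = {x | ∀ i ∉ I, x i = u i})
    (K : ℝ) (η : Fin n → ℝ) (hη : ∀ i ∉ I, η i = 0)
    (hrestr : ∀ v ∈ F, p v = K * Real.exp (∑ i, η i * bval (v i)))
    (phat : (Fin n → Bool) → ℝ)
    (hphat : IsProb phat ∧ IsProductDist phat ∧ ∀ x ∉ F, phat x = 0)
    (α : ℝ) (hα0 : 0 ≤ α) (hα1 : α ≤ 1) :
    (fun v => (1 - α) * p v + α * phat v) ∈ RBM n (m + 1) := by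
  have hclosed : IsClosed (RBM n (m + 1)) := isClosed_closure
  set αk : ℕ → ℝ := fun k => α + (1/2 - α) * (1 / ((k:ℝ) + 1)) with hαk
  have hθ : ∀ k : ℕ, 0 < 1 / ((k:ℝ) + 1) ∧ 1 / ((k:ℝ) + 1) ≤ 1 := by
    intro k
    have hk1 : (0:ℝ) < (k:ℝ) + 1 := by positivity
    constructor
    · positivity
    · rw [div_le_one hk1]; simp [Nat.cast_nonneg]
  have hαk_mem : ∀ k : ℕ, 0 < αk k ∧ αk k < 1 := by
    intro k
    obtain ⟨h1, h2⟩ := hθ k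
    rw [hαk]; dsimp only
    constructor
    · nlinarith [mul_nonneg hα0 (by linarith : (0:ℝ) ≤ 1 - 1 / ((k:ℝ) + 1))]
    · nlinarith [mul_nonneg (by linarith : (0:ℝ) ≤ 1 - α)
        (by linarith : (0:ℝ) ≤ 1 - 1 / ((k:ℝ) + 1))]
  have hαtend : Filter.Tendsto αk Filter.atTop (𝓝 α) := by
    have h0 : Filter.Tendsto (fun k : ℕ => (1/2 - α) * (1 / ((k:ℝ) + 1)))
        Filter.atTop (𝓝 ((1/2 - α) * 0)) :=
      tendsto_one_div_add_atTop_nhds_zero_nat.const_mul _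
    rw [mul_zero] at h0
    have := (tendsto_const_nhds : Filter.Tendsto (fun _ : ℕ => α) Filter.atTop (𝓝 α)).add h0
    rwa [add_zero] at this
  have hqtend : Filter.Tendsto
      (fun k : ℕ => fun v => (1 - αk k) * p v + αk k * phat v)
      Filter.atTop (𝓝 (fun v => (1 - α) * p v + α * phat v)) := by
    rw [tendsto_pi_nhds]
    intro v
    exact ((tendsto_const_nhds.sub hαtend).mul_const (p v)).add (hαtend.mul_const (phat v))
  exact hclosed.mem_of_tendsto hqtend (Filter.Eventually.of_forall fun k =>
    main_case n m W C B p hpdef I u F hFdef K η hη hrestr phat hphat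
      (αk k) (hαk_mem k).1 (hαk_mem k).2)
end
end
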